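/- Let k ≥ 2, q ≥ 1 and π ∈ 𝕊_{k−1}, and let d ∈ {r, s} with corresponding map δ ∈ {ρ, σ} on {1,…,k}. Then there exists a bijection f : W^π_{k,q} → W^{d(π)}_{k,q} such that (i) for all x, y ∈ W^π_{k,q}, x and y are adjacent in G^π_{k,q} if and only if f(x) and f(y) are adjacent in G^{d(π)}_{k,q}, and (ii) L^{d(π)}(f(x)) = δ(L^π(x)) for every x ∈ W^π_{k,q}, where δ(L) denotes the image of the set L under δ. -/

import Mathlib

open Finset

attribute [local instance] Classical.propDecidable

noncomputable section

/-- `π` is a permutation of `{1,…,k-1}` given in one-line notation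
(`π p` is the entry at position `p`), normalized to `0` outside `[1,k-1]`. -/
def OneLine (k : ℕ) (π : ℕ → ℕ) : Prop :=
  Set.BijOn π (Set.Icc 1 (k - 1)) (Set.Icc 1 (k - 1)) ∧
    ∀ p, p ∉ Set.Icc 1 (k - 1) → π p = 0

/-- The set `S(π)` of adjacent inversions of `π`:
those `i ∈ [1,k-2]` such that `i+1` appears before `i` in `π`. -/
def adjInvF (k : ℕ) (π : ℕ → ℕ) : Finset ℕ :=
  (Finset.Icc 1 (k - 2)).filter fun i =>
    ∃ p ∈ Finset.Icc 1 (k - 1), ∃ r ∈ Finset.Icc 1 (k - 1),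
      p < r ∧ π p = i + 1 ∧ π r = i

/-- `W^π_{k,q}`: weakly increasing `(k-1)`-tuples with entries in `[0,q-1]`
that are strictly increasing at every adjacent inversion of `π`
(vectors are functions `ℕ → ℕ` supported on `[1,k-1]`). -/
def W (k q : ℕ) (π : ℕ → ℕ) : Set (ℕ → ℕ) :=
  {v | (∀ i, i ∉ Finset.Icc 1 (k - 1) → v i = 0) ∧
       (∀ i ∈ Finset.Icc 1 (k - 1), v i ≤ q - 1) ∧
       (∀ i, 1 ≤ i → i + 1 ≤ k - 1 → v i ≤ v (i + 1)) ∧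
       (∀ i ∈ adjInvF k π, v i < v (i + 1))}

/-- `x + e_{π_a} + e_{π_{a+1}} + ⋯ + e_{π_{b-1}}`. -/
def shift (π : ℕ → ℕ) (a b : ℕ) (x : ℕ → ℕ) : ℕ → ℕ :=
  fun i => x i + if i ∈ (Finset.Icc a (b - 1)).image π then 1 else 0

/-- Adjacency in the graph `G^π_{k,q}`: one vertex is obtained from the other
by adding `e_{π_a} + ⋯ + e_{π_{b-1}}` for some `1 ≤ a < b ≤ k`. -/
def AdjRel (k : ℕ) (π : ℕ → ℕ) (x y : ℕ → ℕ) : Prop :=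
  ∃ a b, 1 ≤ a ∧ a < b ∧ b ≤ k ∧ (y = shift π a b x ∨ x = shift π a b y)

/-- The number of maximal blocks of consecutive integers of a finite set `T ⊆ ℕ`. -/
def numBlocks (T : Finset ℕ) : ℕ := (T.filter fun t => t + 1 ∉ T).card

/-- `cs_i(π)`: the number of pairs `1 ≤ a < b ≤ k` such that
`T_{a,b} = {π_a,…,π_{b-1}}` decomposes into exactly `i` maximal blocks
of consecutive integers. -/
def cs (k : ℕ) (π : ℕ → ℕ) (i : ℕ) : ℕ :=
  ((Finset.Icc 1 k ×ˢ Finset.Icc 1 k).filter fun p =>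
    p.1 < p.2 ∧ numBlocks ((Finset.Icc p.1 (p.2 - 1)).image π) = i).card

/-- For `i < j`, `{i,j}` is an edge of `G_π` iff `{i,i+1,…,j-1}` occurs as
a set of consecutive entries of `π`. -/
def GpiEdge (k : ℕ) (π : ℕ → ℕ) (i j : ℕ) : Prop :=
  ∃ a, 1 ≤ a ∧ a + (j - i) ≤ k ∧
    (Finset.Icc a (a + (j - i) - 1)).image π = Finset.Icc i (j - 1)

/-- Unordered adjacency in `G_π`. -/
def GpiAdjU (k : ℕ) (π : ℕ → ℕ) (i j : ℕ) : Prop :=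
  (i < j ∧ GpiEdge k π i j) ∨ (j < i ∧ GpiEdge k π j i)

/-- The position of the value `v` in the one-line notation of `π`. -/
def posOf (k : ℕ) (π : ℕ → ℕ) (v : ℕ) : ℕ :=
  if h : ((Finset.Icc 1 (k - 1)).filter fun t => π t = v).Nonempty then
    ((Finset.Icc 1 (k - 1)).filter fun t => π t = v).min' h
  else 0

/-- The rotation `r` on one-line permutations: if `π = π₁…π_{t-1}(k-1)π_{t+1}…π_{k-1}`,
then `r(π) = (π_{t+1}+1)…(π_{k-1}+1) 1 (π₁+1)…(π_{t-1}+1)`. -/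
def rot (k : ℕ) (π : ℕ → ℕ) : ℕ → ℕ := fun p =>
  if p ∉ Finset.Icc 1 (k - 1) then 0
  else if p < k - posOf k π (k - 1) then π (posOf k π (k - 1) + p) + 1
  else if p = k - posOf k π (k - 1) then 1
  else π (p - (k - posOf k π (k - 1))) + 1

/-- The reflection `s` on one-line permutations: if `π = π₁…π_{i-1} 1 π_{i+1}…π_{k-1}`,
then `s(π) = (k+1-π_{i-1})…(k+1-π₁) 1 (k+1-π_{k-1})…(k+1-π_{i+1})`. -/
def srefl (k : ℕ) (π : ℕ → ℕ) : ℕ → ℕ := fun p =>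
  if p ∉ Finset.Icc 1 (k - 1) then 0
  else if p < posOf k π 1 then k + 1 - π (posOf k π 1 - p)
  else if p = posOf k π 1 then 1
  else k + 1 - π (k + posOf k π 1 - p)

/-- The rotation `ρ` of the vertex set `{1,…,k}`. -/
def rotV (k i : ℕ) : ℕ := if i < k then i + 1 else 1

/-- The reflection `σ` of the vertex set `{1,…,k}`. -/
def sreflV (k i : ℕ) : ℕ := if i = 1 then 1 else k + 2 - i

/-- The maximal sorted family `(S₁,…,S_k)` associated with `σ`, `0`-indexed:
`sortedFam k σ (i-1) = S_i`. -/
def sortedFam (k : ℕ) (σ : ℕ → ℕ) : ℕ → Finset ℕ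
  | 0 => insert 1 ((adjInvF k σ).image (· + 1))
  | j + 1 => insert (σ (j + 1) + 1) ((sortedFam k σ j).erase (σ (j + 1)))

/-- `ear(π)`. -/
def ear (k : ℕ) (π : ℕ → ℕ) : ℕ :=
  ((Finset.Icc 1 (k - 2)).filter fun i => π (i + 1) = π i + 1 ∨ π i = π (i + 1) + 1).card
    + (({1, k - 1} : Finset ℕ) ∩ ({π 1, π (k - 1)} : Finset ℕ)).card

/-- `ε_i(π) = 1` if `i-1 ∈ S(π)` and `0` otherwise. -/
def eps (k : ℕ) (π : ℕ → ℕ) (i : ℕ) : ℕ := if i - 1 ∈ adjInvF k π then 1 else 0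

/-- Extension of a vector with the conventions `x_k = q-1` (`x₀ = 0` holds by
the normalization of vectors in `W^π_{k,q}`). -/
def xext (k q : ℕ) (x : ℕ → ℕ) (i : ℕ) : ℕ := if i = k then q - 1 else x i

/-- The label list `L^π(x) = {i ∈ [1,k] : x_{i-1} < x_i - ε_i(π)}`. -/
def labels (k q : ℕ) (π : ℕ → ℕ) (x : ℕ → ℕ) : Finset ℕ :=
  (Finset.Icc 1 k).filter fun i => xext k q x (i - 1) + eps k π i < xext k q x i

/-- A Sperner labeling of `G^π_{k,q}`. -/
def IsSperner (k q : ℕ) (π : ℕ → ℕ) (f : (ℕ → ℕ) → ℕ) : Prop :=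
  (∀ x ∈ W k q π, f x = 0 ∨ f x ∈ labels k q π x) ∧
  (∀ x ∈ W k q π, ∀ y ∈ W k q π, AdjRel k π x y → f x = f y ∨ f x = 0 ∨ f y = 0)

/-- The entry `w` appears between the entries `u` and `v` in `π`. -/
def Between (k : ℕ) (π : ℕ → ℕ) (u v w : ℕ) : Prop :=
  (posOf k π u < posOf k π w ∧ posOf k π w < posOf k π v) ∨
  (posOf k π v < posOf k π w ∧ posOf k π w < posOf k π u)

/-- A good set of colors for `π`. -/
def GoodSet (k : ℕ) (π : ℕ → ℕ) (C : Finset ℕ) : Prop :=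
  C ⊆ Finset.Icc 1 k ∧
  (∀ i ∈ C, ∀ j ∈ C, i ≠ j → ¬ GpiAdjU k π i j) ∧
  (∀ a ∈ C, ∀ b ∈ C, 1 < a → a < b → b < k →
      ((Between k π (a - 1) b a ∨ Between k π (a - 1) b (b - 1)) ∧
       (Between k π (b - 1) a (a - 1) ∨ Between k π (b - 1) a b))) ∧
  (1 ∈ C → ∀ b ∈ C, b ≠ 1 → Between k π 1 (b - 1) b) ∧
  (k ∈ C → ∀ b ∈ C, b ≠ k → Between k π b (k - 1) (b - 1))

/-- `x_a - x_{a-1} - ε_a(π)`, the `a`-th coordinate of the distance map `D`. -/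
def dval (k q : ℕ) (π : ℕ → ℕ) (x : ℕ → ℕ) (a : ℕ) : ℕ :=
  xext k q x a - xext k q x (a - 1) - eps k π a

/-- The distance coloring determined by a set of colors `C`:
`x` gets color `a ∈ C` if `dval x a` is the unique maximum of `dval x` on `C`,
and `0` otherwise. -/
def dcol (k q : ℕ) (π : ℕ → ℕ) (C : Finset ℕ) (x : ℕ → ℕ) : ℕ :=
  if h : ∃ a ∈ C, ∀ b ∈ C, b ≠ a → dval k q π x b < dval k q π x a then h.choose else 0


/-! ### Auxiliary development -/

section Aux

lemma adjInv_subset (k : ℕ) (ψ : ℕ → ℕ) : adjInvF k ψ ⊆ Finset.Icc 1 (k-2) := by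
  intro i hi
  simp only [adjInvF, Finset.mem_filter] at hi
  exact hi.1

lemma eps_of_not_mem {k : ℕ} {ψ : ℕ → ℕ} {i : ℕ} (h : i - 1 ∉ adjInvF k ψ) :
    eps k ψ i = 0 := by
  unfold eps; split
  · exact absurd ‹_› h
  · rfl

lemma eps_of_mem {k : ℕ} {ψ : ℕ → ℕ} {i : ℕ} (h : i - 1 ∈ adjInvF k ψ) :
    eps k ψ i = 1 := by
  unfold eps; split
  · rfl
  · exact absurd h ‹_›

lemma eps_one (k : ℕ) (ψ : ℕ → ℕ) : eps k ψ 1 = 0 := by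
  apply eps_of_not_mem
  intro h
  have := adjInv_subset k ψ h; simp [Finset.mem_Icc] at this

lemma eps_top (k : ℕ) (ψ : ℕ → ℕ) (hk : 2 ≤ k) : eps k ψ k = 0 := by
  apply eps_of_not_mem
  intro h
  have := adjInv_subset k ψ h; simp [Finset.mem_Icc] at this; omega

lemma eps_le_one (k : ℕ) (ψ : ℕ → ℕ) (i : ℕ) : eps k ψ i ≤ 1 := by
  unfold eps; split <;> omega

lemma xext_ne {k q : ℕ} {x : ℕ → ℕ} {i : ℕ} (h : i ≠ k) : xext k q x i = x i := if_neg h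

lemma xext_k {k q : ℕ} {x : ℕ → ℕ} : xext k q x k = q - 1 := if_pos rfl

/-- cumulative sums of a gap function plus eps -/
def cumG (k : ℕ) (ψ G : ℕ → ℕ) (j : ℕ) : ℕ := ∑ i ∈ Finset.Icc 1 j, (G i + eps k ψ i)

lemma cumG_zero (k : ℕ) (ψ G : ℕ → ℕ) : cumG k ψ G 0 = 0 := by
  unfold cumG
  rw [(by rw [Finset.Icc_eq_empty_iff]; omega : Finset.Icc 1 0 = ∅), Finset.sum_empty]

lemma cumG_succ (k : ℕ) (ψ G : ℕ → ℕ) (j : ℕ) :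
    cumG k ψ G (j+1) = cumG k ψ G j + (G (j+1) + eps k ψ (j+1)) := by
  unfold cumG; exact Finset.sum_Icc_succ_top (by omega) _

lemma cumG_pred {k : ℕ} {ψ G : ℕ → ℕ} {i : ℕ} (h : 1 ≤ i) :
    cumG k ψ G i = cumG k ψ G (i-1) + (G i + eps k ψ i) := by
  have := cumG_succ k ψ G (i-1)
  rw [(by omega : i - 1 + 1 = i)] at this
  exact this

lemma cumG_mono (k : ℕ) (ψ G : ℕ → ℕ) {j j' : ℕ} (h : j ≤ j') :
    cumG k ψ G j ≤ cumG k ψ G j' := by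
  unfold cumG
  exact Finset.sum_le_sum_of_subset (Finset.Icc_subset_Icc_right h)

/-- the vector determined by a gap function -/
def mkv (k : ℕ) (ψ G : ℕ → ℕ) : ℕ → ℕ :=
  fun j => if j ∈ Finset.Icc 1 (k-1) then cumG k ψ G j else 0

section
variable {k q : ℕ} {π : ℕ → ℕ} {x : ℕ → ℕ}

lemma W_step (hk : 2 ≤ k) (hx : x ∈ W k q π) :
    ∀ j ∈ Finset.Icc 1 k, xext k q x (j-1) + eps k π j ≤ xext k q x j := by
  obtain ⟨hx0, hx1, hx2, hx3⟩ := hx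
  intro j hj
  simp only [Finset.mem_Icc] at hj
  rcases eq_or_lt_of_le hj.1 with h1 | h1
  · -- j = 1
    rw [← h1]
    have h00 : x 0 = 0 := hx0 0 (by simp [Finset.mem_Icc])
    rw [(by norm_num : (1:ℕ) - 1 = 0), xext_ne (by omega), h00, eps_one]
    omega
  rcases eq_or_lt_of_le hj.2 with h2 | h2
  · -- j = k
    rw [h2, xext_ne (by omega : k - 1 ≠ k), xext_k, eps_top k π hk]
    have : x (k-1) ≤ q - 1 := hx1 (k-1) (by simp [Finset.mem_Icc]; omega)
    omega
  · -- 2 ≤ j ≤ k-1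
    rw [xext_ne (by omega : j - 1 ≠ k), xext_ne (by omega : j ≠ k)]
    by_cases hS : j - 1 ∈ adjInvF k π
    · have h3 := hx3 (j-1) hS
      rw [(by omega : j - 1 + 1 = j)] at h3
      rw [eps_of_mem hS]
      omega
    · have h3 := hx2 (j-1) (by omega) (by omega)
      rw [(by omega : j - 1 + 1 = j)] at h3
      rw [eps_of_not_mem hS]
      omega

lemma xext_cum (hk : 2 ≤ k) (hx : x ∈ W k q π) :
    ∀ j, j ≤ k → xext k q x j = cumG k π (dval k q π x) j := by
  intro j
  induction j with
  | zero =>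
    intro _
    have h00 : x 0 = 0 := hx.1 0 (by simp [Finset.mem_Icc])
    rw [cumG_zero, xext_ne (by omega), h00]
  | succ n ih =>
    intro hn
    have h1 := ih (by omega)
    have h2 := W_step hk hx (n+1) (by simp [Finset.mem_Icc]; omega)
    rw [cumG_succ, ← h1]
    simp only [dval] at *
    rw [(by omega : n + 1 - 1 = n)] at h2 ⊢
    omega

lemma cum_dval_k (hk : 2 ≤ k) (hq : 1 ≤ q) (hx : x ∈ W k q π) :
    cumG k π (dval k q π x) k = q - 1 := by
  have := xext_cum hk hx k le_rfl
  rw [xext_k] at this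
  omega

lemma mkv_mem_W (hk : 2 ≤ k) (hq : 1 ≤ q) (ψ G : ℕ → ℕ)
    (h : cumG k ψ G k = q - 1) : mkv k ψ G ∈ W k q ψ := by
  refine ⟨?_, ?_, ?_, ?_⟩
  · intro i hi; simp [mkv, hi]
  · intro i hi
    simp only [mkv, if_pos hi]
    calc cumG k ψ G i ≤ cumG k ψ G k := cumG_mono k ψ G (by simp [Finset.mem_Icc] at hi; omega)
    _ = q - 1 := h
  · intro i h1 h2
    have hi : i ∈ Finset.Icc 1 (k-1) := by simp [Finset.mem_Icc]; omega
    have hi1 : i+1 ∈ Finset.Icc 1 (k-1) := by simp [Finset.mem_Icc]; omega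
    simp only [mkv, if_pos hi, if_pos hi1]
    exact cumG_mono k ψ G (by omega)
  · intro i hiS
    have hmem := adjInv_subset k ψ hiS
    simp only [Finset.mem_Icc] at hmem
    have hi : i ∈ Finset.Icc 1 (k-1) := by simp [Finset.mem_Icc]; omega
    have hi1 : i+1 ∈ Finset.Icc 1 (k-1) := by simp [Finset.mem_Icc]; omega
    simp only [mkv, if_pos hi, if_pos hi1, cumG_succ]
    have heps : eps k ψ (i+1) = 1 := eps_of_mem (by rw [(by omega : i + 1 - 1 = i)]; exact hiS)
    omega

lemma xext_mkv (hk : 2 ≤ k) (hq : 1 ≤ q) (ψ G : ℕ → ℕ)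
    (h : cumG k ψ G k = q - 1) : ∀ j, j ≤ k → xext k q (mkv k ψ G) j = cumG k ψ G j := by
  intro j hj
  rcases eq_or_lt_of_le hj with h1 | h1
  · subst h1; rw [xext_k, h]
  by_cases h0 : j = 0
  · subst h0
    rw [xext_ne (by omega), cumG_zero]
    simp [mkv, (by simp [Finset.mem_Icc] : (0:ℕ) ∉ Finset.Icc 1 (k-1))]
  · have hj' : j ∈ Finset.Icc 1 (k-1) := by simp [Finset.mem_Icc]; omega
    rw [xext_ne (by omega)]
    simp [mkv, hj']

lemma dval_mkv (hk : 2 ≤ k) (hq : 1 ≤ q) (ψ G : ℕ → ℕ)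
    (h : cumG k ψ G k = q - 1) : ∀ i ∈ Finset.Icc 1 k, dval k q ψ (mkv k ψ G) i = G i := by
  intro i hi
  simp only [Finset.mem_Icc] at hi
  have h1 := xext_mkv hk hq ψ G h i hi.2
  have h2 := xext_mkv hk hq ψ G h (i-1) (by omega)
  have h3 := cumG_pred (G := G) (ψ := ψ) (k := k) hi.1
  simp only [dval]
  omega

lemma labels_mkv (hk : 2 ≤ k) (hq : 1 ≤ q) (ψ G : ℕ → ℕ)
    (h : cumG k ψ G k = q - 1) :
    labels k q ψ (mkv k ψ G) = (Finset.Icc 1 k).filter (fun i => 0 < G i) := by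
  unfold labels
  apply Finset.filter_congr
  intro i hi
  simp only [Finset.mem_Icc] at hi
  have h1 := xext_mkv hk hq ψ G h i hi.2
  have h2 := xext_mkv hk hq ψ G h (i-1) (by omega)
  have h3 := cumG_pred (G := G) (ψ := ψ) (k := k) hi.1
  rw [h1, h2, h3]
  constructor
  · intro h4; omega
  · intro h4; omega

lemma mkv_congr (k : ℕ) (ψ : ℕ → ℕ) (G1 G2 : ℕ → ℕ)
    (h : ∀ i ∈ Finset.Icc 1 (k-1), G1 i = G2 i) : mkv k ψ G1 = mkv k ψ G2 := by
  funext j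
  unfold mkv
  split
  · next hj =>
    unfold cumG
    apply Finset.sum_congr rfl
    intro i hi
    simp only [Finset.mem_Icc] at hi hj
    rw [h i (by simp [Finset.mem_Icc]; omega)]
  · rfl

lemma mkv_dval (hk : 2 ≤ k) (hq : 1 ≤ q) (hx : x ∈ W k q π) :
    mkv k π (dval k q π x) = x := by
  funext j
  unfold mkv
  split
  · next hj =>
    have hjk : j ≤ k := by simp [Finset.mem_Icc] at hj; omega
    have h1 := xext_cum hk hx j hjk
    rw [xext_ne (by simp [Finset.mem_Icc] at hj; omega)] at h1
    exact h1.symm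
  · next hj => exact (hx.1 j hj).symm

lemma labels_eq_filter (hk : 2 ≤ k) (hq : 1 ≤ q) (hx : x ∈ W k q π) :
    labels k q π x = (Finset.Icc 1 k).filter (fun i => 0 < dval k q π x i) := by
  have h := cum_dval_k hk hq hx
  nth_rewrite 1 [← mkv_dval hk hq hx]
  exact labels_mkv hk hq π _ h

end
end Aux

section Aux2

/-- position function for the rotated permutation -/
def Qrot (k : ℕ) (π : ℕ → ℕ) : ℕ → ℕ := fun w =>
  if w = 1 then k - posOf k π (k-1)
  else if posOf k π (k-1) < posOf k π (w-1) then posOf k π (w-1) - posOf k π (k-1)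
  else posOf k π (w-1) + (k - posOf k π (k-1))

/-- position function for the reflected permutation -/
def Qsr (k : ℕ) (π : ℕ → ℕ) : ℕ → ℕ := fun w =>
  if w = 1 then posOf k π 1
  else if posOf k π (k+1-w) < posOf k π 1 then posOf k π 1 - posOf k π (k+1-w)
  else k + posOf k π 1 - posOf k π (k+1-w)

variable {k q : ℕ} {π : ℕ → ℕ}

lemma posOf_spec (hπ : OneLine k π) {v : ℕ} (hv : v ∈ Finset.Icc 1 (k-1)) :
    posOf k π v ∈ Finset.Icc 1 (k-1) ∧ π (posOf k π v) = v := by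
  unfold posOf
  split
  · next h =>
    have hm := Finset.min'_mem _ h
    rw [Finset.mem_filter] at hm
    exact hm
  · next h =>
    exfalso
    apply h
    simp only [Finset.mem_Icc] at hv
    obtain ⟨p, hp, hpv⟩ := hπ.1.2.2 (show v ∈ Set.Icc 1 (k-1) by rw [Set.mem_Icc]; omega)
    rw [Set.mem_Icc] at hp
    exact ⟨p, Finset.mem_filter.mpr ⟨Finset.mem_Icc.mpr hp, hpv⟩⟩

lemma posOf_uniq (hπ : OneLine k π) {v p : ℕ} (hv : v ∈ Finset.Icc 1 (k-1))
    (hp : p ∈ Finset.Icc 1 (k-1)) (hpv : π p = v) : p = posOf k π v := by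
  obtain ⟨h1, h2⟩ := posOf_spec hπ hv
  apply hπ.1.2.1
  · rw [Finset.mem_Icc] at hp; rw [Set.mem_Icc]; exact hp
  · rw [Finset.mem_Icc] at h1; rw [Set.mem_Icc]; exact h1
  · rw [hpv, h2]

lemma pi_mem (hπ : OneLine k π) {p : ℕ} (hp : p ∈ Finset.Icc 1 (k-1)) :
    π p ∈ Finset.Icc 1 (k-1) := by
  have := hπ.1.1 (show p ∈ Set.Icc 1 (k-1) by rw [Finset.mem_Icc] at hp; rw [Set.mem_Icc]; exact hp)
  rw [Set.mem_Icc] at this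
  rw [Finset.mem_Icc]
  exact this

lemma pi_inj (hπ : OneLine k π) {p r : ℕ} (hp : p ∈ Finset.Icc 1 (k-1))
    (hr : r ∈ Finset.Icc 1 (k-1)) (h : π p = π r) : p = r := by
  apply hπ.1.2.1 <;> first
    | (rw [Finset.mem_Icc] at hp; rw [Set.mem_Icc]; exact hp)
    | (rw [Finset.mem_Icc] at hr; rw [Set.mem_Icc]; exact hr)
    | exact h

/- value lemmas for rot -/
lemma rot_of_lt {p : ℕ} (hp : p ∈ Finset.Icc 1 (k-1)) (h : p < k - posOf k π (k-1)) :
    rot k π p = π (posOf k π (k-1) + p) + 1 := by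
  unfold rot
  split_ifs with h1 h2 h3 <;> first | rfl | exact absurd hp h1 | (exfalso; omega)

lemma rot_of_eq {p : ℕ} (hp : p ∈ Finset.Icc 1 (k-1)) (h : p = k - posOf k π (k-1)) :
    rot k π p = 1 := by
  unfold rot
  split_ifs with h1 h2 h3 <;> first | rfl | exact absurd hp h1 | (exfalso; omega)

lemma rot_of_gt {p : ℕ} (hp : p ∈ Finset.Icc 1 (k-1)) (h : k - posOf k π (k-1) < p) :
    rot k π p = π (p - (k - posOf k π (k-1))) + 1 := by
  unfold rot
  split_ifs with h1 h2 h3 <;> first | rfl | exact absurd hp h1 | (exfalso; omega)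

-- value lemmas for srefl
lemma srefl_of_lt {p : ℕ} (hp : p ∈ Finset.Icc 1 (k-1)) (h : p < posOf k π 1) :
    srefl k π p = k + 1 - π (posOf k π 1 - p) := by
  unfold srefl
  split_ifs with h1 h2 h3 <;> first | rfl | exact absurd hp h1 | (exfalso; omega)

lemma srefl_of_eq {p : ℕ} (hp : p ∈ Finset.Icc 1 (k-1)) (h : p = posOf k π 1) :
    srefl k π p = 1 := by
  unfold srefl
  split_ifs with h1 h2 h3 <;> first | rfl | exact absurd hp h1 | (exfalso; omega)

lemma srefl_of_gt {p : ℕ} (hp : p ∈ Finset.Icc 1 (k-1)) (h : posOf k π 1 < p) :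
    srefl k π p = k + 1 - π (k + posOf k π 1 - p) := by
  unfold srefl
  split_ifs with h1 h2 h3 <;> first | rfl | exact absurd hp h1 | (exfalso; omega)

lemma Qrot_spec1 (hπ : OneLine k π) (hk : 2 ≤ k) :
    ∀ w ∈ Finset.Icc 1 (k-1), Qrot k π w ∈ Finset.Icc 1 (k-1) ∧ rot k π (Qrot k π w) = w := by
  have htm := posOf_spec hπ (show (k-1) ∈ Finset.Icc 1 (k-1) by rw [Finset.mem_Icc]; omega)
  set t := posOf k π (k-1) with hts
  rw [Finset.mem_Icc] at htm
  intro w hw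
  rw [Finset.mem_Icc] at hw
  by_cases hw1 : w = 1
  · subst hw1
    have hQ : Qrot k π 1 = k - t := by unfold Qrot; rw [if_pos rfl]
    rw [hQ]
    have hmem : k - t ∈ Finset.Icc 1 (k-1) := by rw [Finset.mem_Icc]; omega
    exact ⟨hmem, rot_of_eq (π := π) hmem (by omega)⟩
  · have hwm : w - 1 ∈ Finset.Icc 1 (k-1) := by rw [Finset.mem_Icc]; omega
    obtain ⟨hP1, hP2⟩ := posOf_spec hπ hwm
    rw [Finset.mem_Icc] at hP1
    have hPt : posOf k π (w-1) ≠ t := by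
      intro h
      rw [h, htm.2] at hP2
      omega
    by_cases hgt : t < posOf k π (w-1)
    · have hQ : Qrot k π w = posOf k π (w-1) - t := by
        unfold Qrot; rw [if_neg hw1, if_pos hgt]
      rw [hQ]
      have hmem : posOf k π (w-1) - t ∈ Finset.Icc 1 (k-1) := by rw [Finset.mem_Icc]; omega
      refine ⟨hmem, ?_⟩
      rw [rot_of_lt hmem (by omega), ← hts, (by omega : t + (posOf k π (w-1) - t) = posOf k π (w-1)), hP2]
      omega
    · have hQ : Qrot k π w = posOf k π (w-1) + (k - t) := by
        unfold Qrot; rw [if_neg hw1, if_neg hgt]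
      rw [hQ]
      have hlt : posOf k π (w-1) < t := by omega
      have hmem : posOf k π (w-1) + (k - t) ∈ Finset.Icc 1 (k-1) := by rw [Finset.mem_Icc]; omega
      refine ⟨hmem, ?_⟩
      rw [rot_of_gt hmem (by omega), ← hts, (by omega : posOf k π (w-1) + (k - t) - (k - t) = posOf k π (w-1)), hP2]
      omega

lemma Qrot_spec2 (hπ : OneLine k π) (hk : 2 ≤ k) :
    ∀ p ∈ Finset.Icc 1 (k-1), ∀ w ∈ Finset.Icc 1 (k-1), rot k π p = w → p = Qrot k π w := by
  have htm := posOf_spec hπ (show (k-1) ∈ Finset.Icc 1 (k-1) by rw [Finset.mem_Icc]; omega)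
  set t := posOf k π (k-1) with hts
  rw [Finset.mem_Icc] at htm
  intro p hp w hw hpw
  have hp' := hp
  rw [Finset.mem_Icc] at hp' hw
  rcases lt_trichotomy p (k - t) with hc | hc | hc
  · rw [rot_of_lt hp hc, ← hts] at hpw
    have harg : t + p ∈ Finset.Icc 1 (k-1) := by rw [Finset.mem_Icc]; omega
    have hw1 : w ≠ 1 := by
      intro h; rw [h] at hpw
      have := pi_mem hπ harg
      rw [Finset.mem_Icc] at this
      omega
    have hval : π (t + p) = w - 1 := by omega
    have := posOf_uniq hπ (show w - 1 ∈ Finset.Icc 1 (k-1) by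
      have := pi_mem hπ harg; rw [Finset.mem_Icc] at this ⊢; omega) harg hval
    unfold Qrot
    rw [if_neg hw1, if_pos (by omega : t < posOf k π (w-1))]
    omega
  · rw [rot_of_eq (π := π) hp (by omega)] at hpw
    unfold Qrot
    rw [if_pos hpw.symm]
    omega
  · rw [rot_of_gt hp hc, ← hts] at hpw
    have harg : p - (k - t) ∈ Finset.Icc 1 (k-1) := by rw [Finset.mem_Icc]; omega
    have hw1 : w ≠ 1 := by
      intro h; rw [h] at hpw
      have := pi_mem hπ harg
      rw [Finset.mem_Icc] at this
      omega
    have hval : π (p - (k - t)) = w - 1 := by omega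
    have := posOf_uniq hπ (show w - 1 ∈ Finset.Icc 1 (k-1) by
      have := pi_mem hπ harg; rw [Finset.mem_Icc] at this ⊢; omega) harg hval
    unfold Qrot
    rw [if_neg hw1, if_neg (by omega : ¬ t < posOf k π (w-1))]
    omega

/- spec for Qsr -/
lemma Qsr_spec1 (hπ : OneLine k π) (hk : 2 ≤ k) :
    ∀ w ∈ Finset.Icc 1 (k-1), Qsr k π w ∈ Finset.Icc 1 (k-1) ∧ srefl k π (Qsr k π w) = w := by
  have htm := posOf_spec hπ (show (1:ℕ) ∈ Finset.Icc 1 (k-1) by rw [Finset.mem_Icc]; omega)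
  set io := posOf k π 1 with hio
  rw [Finset.mem_Icc] at htm
  intro w hw
  rw [Finset.mem_Icc] at hw
  by_cases hw1 : w = 1
  · subst hw1
    have hQ : Qsr k π 1 = io := by unfold Qsr; rw [if_pos rfl]
    rw [hQ]
    have hmem : io ∈ Finset.Icc 1 (k-1) := by rw [Finset.mem_Icc]; omega
    exact ⟨hmem, srefl_of_eq (π := π) hmem (by omega)⟩
  · have hwm : k + 1 - w ∈ Finset.Icc 1 (k-1) := by rw [Finset.mem_Icc]; omega
    obtain ⟨hP1, hP2⟩ := posOf_spec hπ hwm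
    rw [Finset.mem_Icc] at hP1
    have hPio : posOf k π (k+1-w) ≠ io := by
      intro h
      rw [h, htm.2] at hP2
      omega
    by_cases hlt : posOf k π (k+1-w) < io
    · have hQ : Qsr k π w = io - posOf k π (k+1-w) := by
        unfold Qsr; rw [if_neg hw1, if_pos hlt]
      rw [hQ]
      have hmem : io - posOf k π (k+1-w) ∈ Finset.Icc 1 (k-1) := by rw [Finset.mem_Icc]; omega
      refine ⟨hmem, ?_⟩
      rw [srefl_of_lt hmem (by omega), ← hio, (by omega : io - (io - posOf k π (k+1-w)) = posOf k π (k+1-w)), hP2]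
      omega
    · have hQ : Qsr k π w = k + io - posOf k π (k+1-w) := by
        unfold Qsr; rw [if_neg hw1, if_neg hlt]
      rw [hQ]
      have hgt : io < posOf k π (k+1-w) := by omega
      have hmem : k + io - posOf k π (k+1-w) ∈ Finset.Icc 1 (k-1) := by rw [Finset.mem_Icc]; omega
      refine ⟨hmem, ?_⟩
      rw [srefl_of_gt hmem (by omega), ← hio, (by omega : k + io - (k + io - posOf k π (k+1-w)) = posOf k π (k+1-w)), hP2]
      omega

lemma Qsr_spec2 (hπ : OneLine k π) (hk : 2 ≤ k) :
    ∀ p ∈ Finset.Icc 1 (k-1), ∀ w ∈ Finset.Icc 1 (k-1), srefl k π p = w → p = Qsr k π w := by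
  have htm := posOf_spec hπ (show (1:ℕ) ∈ Finset.Icc 1 (k-1) by rw [Finset.mem_Icc]; omega)
  set io := posOf k π 1 with hio
  rw [Finset.mem_Icc] at htm
  intro p hp w hw hpw
  have hp' := hp
  rw [Finset.mem_Icc] at hp' hw
  rcases lt_trichotomy p io with hc | hc | hc
  · rw [srefl_of_lt hp hc, ← hio] at hpw
    have harg : io - p ∈ Finset.Icc 1 (k-1) := by rw [Finset.mem_Icc]; omega
    have hpim := pi_mem hπ harg
    rw [Finset.mem_Icc] at hpim
    have hw1 : w ≠ 1 := by omega
    have hval : π (io - p) = k + 1 - w := by omega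
    have := posOf_uniq hπ (show k + 1 - w ∈ Finset.Icc 1 (k-1) by
      rw [Finset.mem_Icc]; omega) harg hval
    unfold Qsr
    rw [if_neg hw1, if_pos (by omega : posOf k π (k+1-w) < io)]
    omega
  · rw [srefl_of_eq (π := π) hp (by omega)] at hpw
    unfold Qsr
    rw [if_pos hpw.symm]
    omega
  · rw [srefl_of_gt hp hc, ← hio] at hpw
    have harg : k + io - p ∈ Finset.Icc 1 (k-1) := by rw [Finset.mem_Icc]; omega
    have hpim := pi_mem hπ harg
    rw [Finset.mem_Icc] at hpim
    have hw1 : w ≠ 1 := by omega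
    have hval : π (k + io - p) = k + 1 - w := by omega
    have := posOf_uniq hπ (show k + 1 - w ∈ Finset.Icc 1 (k-1) by
      rw [Finset.mem_Icc]; omega) harg hval
    unfold Qsr
    rw [if_neg hw1, if_neg (by omega : ¬ posOf k π (k+1-w) < io)]
    omega

/-- characterization of adjacent inversions via a position function -/
lemma adjInv_char (k : ℕ) (ψ R : ℕ → ℕ) (hk : 2 ≤ k)
    (h1 : ∀ w ∈ Finset.Icc 1 (k-1), R w ∈ Finset.Icc 1 (k-1) ∧ ψ (R w) = w)
    (h2 : ∀ p ∈ Finset.Icc 1 (k-1), ∀ w ∈ Finset.Icc 1 (k-1), ψ p = w → p = R w) :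
    ∀ i, i ∈ adjInvF k ψ ↔ (i ∈ Finset.Icc 1 (k-2) ∧ R (i+1) < R i) := by
  intro i
  simp only [adjInvF, Finset.mem_filter]
  constructor
  · rintro ⟨hi, p, hp, r, hr, hpr, hp1, hr1⟩
    refine ⟨hi, ?_⟩
    rw [Finset.mem_Icc] at hi
    have hi1 : i ∈ Finset.Icc 1 (k-1) := by rw [Finset.mem_Icc]; omega
    have hi2 : i + 1 ∈ Finset.Icc 1 (k-1) := by rw [Finset.mem_Icc]; omega
    rw [← h2 p hp (i+1) hi2 hp1, ← h2 r hr i hi1 hr1]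
    exact hpr
  · rintro ⟨hi, hlt⟩
    refine ⟨hi, ?_⟩
    rw [Finset.mem_Icc] at hi
    have hi1 : i ∈ Finset.Icc 1 (k-1) := by rw [Finset.mem_Icc]; omega
    have hi2 : i + 1 ∈ Finset.Icc 1 (k-1) := by rw [Finset.mem_Icc]; omega
    obtain ⟨hm2, hv2⟩ := h1 (i+1) hi2
    obtain ⟨hm1, hv1⟩ := h1 i hi1
    exact ⟨R (i+1), hm2, R i, hm1, hlt, hv2, hv1⟩

/-- sum of eps equals the number of adjacent inversions -/
lemma sum_eps (k : ℕ) (ψ : ℕ → ℕ) (hk : 2 ≤ k) :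
    ∑ i ∈ Finset.Icc 1 k, eps k ψ i = (adjInvF k ψ).card := by
  have hmap : Finset.Icc 1 k = Finset.map (addLeftEmbedding 1) (Finset.Icc 0 (k-1)) := by
    rw [Finset.map_add_left_Icc]
    congr 1
    omega
  rw [hmap, Finset.sum_map]
  have hcong : ∀ j ∈ Finset.Icc 0 (k-1),
      eps k ψ (addLeftEmbedding 1 j) = (if j ∈ adjInvF k ψ then 1 else 0) := by
    intro j hj
    have : (addLeftEmbedding 1 j : ℕ) = 1 + j := rfl
    rw [this]
    unfold eps
    rw [(by omega : 1 + j - 1 = j)]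
  rw [Finset.sum_congr rfl hcong, Finset.sum_ite_mem]
  rw [Finset.inter_eq_right.mpr (by
    intro i hi
    have := adjInv_subset k ψ hi
    rw [Finset.mem_Icc] at this ⊢
    omega)]
  simp

end Aux2

section Aux3
variable {k q : ℕ} {π : ℕ → ℕ}

lemma posOf_bounds (hπ : OneLine k π) {v : ℕ} (h1 : 1 ≤ v) (h2 : v ≤ k-1) :
    1 ≤ posOf k π v ∧ posOf k π v ≤ k-1 ∧ π (posOf k π v) = v := by
  obtain ⟨hm, hv⟩ := posOf_spec hπ (show v ∈ Finset.Icc 1 (k-1) by rw [Finset.mem_Icc]; exact ⟨h1, h2⟩)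
  rw [Finset.mem_Icc] at hm
  exact ⟨hm.1, hm.2, hv⟩

lemma posOf_ne (hπ : OneLine k π) {v w : ℕ} (hv1 : 1 ≤ v) (hv2 : v ≤ k-1)
    (hw1 : 1 ≤ w) (hw2 : w ≤ k-1) (hvw : v ≠ w) : posOf k π v ≠ posOf k π w := by
  intro h
  apply hvw
  have a1 := (posOf_bounds hπ hv1 hv2).2.2
  have a2 := (posOf_bounds hπ hw1 hw2).2.2
  rw [← a1, ← a2, h]

lemma card_adjInv_rot (hπ : OneLine k π) (hk : 2 ≤ k) :
    (adjInvF k (rot k π)).card = (adjInvF k π).card := by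
  rcases eq_or_lt_of_le hk with hk2 | hk3
  · have hemp : Finset.Icc 1 (k-2) = ∅ := by rw [Finset.Icc_eq_empty_iff]; omega
    rw [Finset.card_eq_zero.mpr (Finset.subset_empty.mp (hemp ▸ adjInv_subset k (rot k π))),
        Finset.card_eq_zero.mpr (Finset.subset_empty.mp (hemp ▸ adjInv_subset k π))]
  · have hchar1 := adjInv_char k (rot k π) (Qrot k π) hk (Qrot_spec1 hπ hk) (Qrot_spec2 hπ hk)
    have hchar2 := adjInv_char k π (posOf k π) hk
      (fun w hw => ⟨(posOf_spec hπ hw).1, (posOf_spec hπ hw).2⟩)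
      (fun p hp w hw h => posOf_uniq hπ hw hp h)
    have hS1 : adjInvF k (rot k π)
        = (Finset.Icc 1 (k-2)).filter (fun i => Qrot k π (i+1) < Qrot k π i) := by
      ext i; rw [hchar1 i, Finset.mem_filter]
    have hS2 : adjInvF k π
        = (Finset.Icc 1 (k-2)).filter (fun i => posOf k π (i+1) < posOf k π i) := by
      ext i; rw [hchar2 i, Finset.mem_filter]
    rw [hS1, hS2, Finset.card_filter, Finset.card_filter]
    have main : ∀ n, 1 ≤ n → n ≤ k-2 →
        (∑ i ∈ Finset.Icc 1 n, if Qrot k π (i+1) < Qrot k π i then 1 else 0)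
        = (∑ i ∈ Finset.Icc 1 (n-1), if posOf k π (i+1) < posOf k π i then 1 else 0)
          + (if posOf k π (k-1) < posOf k π n then 1 else 0) := by
      intro n hn1
      induction n with
      | zero => omega
      | succ m ih =>
        intro hm
        by_cases hm0 : m = 0
        · subst hm0
          rw [Finset.Icc_self, Finset.sum_singleton]
          rw [(show (0:ℕ)+1-1 = 0 by rfl),
            (show Finset.Icc 1 0 = ∅ by rw [Finset.Icc_eq_empty_iff]; omega), Finset.sum_empty,
            (show (0:ℕ)+1 = 1 by rfl), (show (1:ℕ)+1 = 2 by rfl)]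
          have hQ1 : Qrot k π 1 = k - posOf k π (k-1) := by unfold Qrot; rw [if_pos rfl]
          have hQ2 : Qrot k π 2 = if posOf k π (k-1) < posOf k π 1
              then posOf k π 1 - posOf k π (k-1) else posOf k π 1 + (k - posOf k π (k-1)) := by
            unfold Qrot
            rw [if_neg (by omega), (show (2:ℕ)-1 = 1 by rfl)]
          have f1 := posOf_bounds hπ (v := 1) (by omega) (by omega)
          have f3 := posOf_bounds hπ (v := k-1) (by omega) (by omega)
          have ne1 := posOf_ne hπ (v := 1) (w := k-1) (by omega) (by omega) (by omega) (by omega) (by omega)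
          rw [hQ1, hQ2]
          split_ifs <;> omega
        · have hm1 : 1 ≤ m := by omega
          have ih' := ih hm1 (by omega)
          rw [Finset.sum_Icc_succ_top (by omega : 1 ≤ m+1), ih', (show m+1-1 = m by omega)]
          have hsplit : (∑ i ∈ Finset.Icc 1 m, if posOf k π (i+1) < posOf k π i then 1 else 0)
              = (∑ i ∈ Finset.Icc 1 (m-1), if posOf k π (i+1) < posOf k π i then 1 else 0)
                + (if posOf k π (m+1) < posOf k π m then 1 else 0) := by
            have h := Finset.sum_Icc_succ_top (a := 1) (b := m-1) (by omega)
              (fun i => if posOf k π (i+1) < posOf k π i then 1 else 0)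
            rw [(show m-1+1 = m by omega)] at h
            exact h
          rw [hsplit]
          have hQ1 : Qrot k π (m+1) = if posOf k π (k-1) < posOf k π m
              then posOf k π m - posOf k π (k-1) else posOf k π m + (k - posOf k π (k-1)) := by
            unfold Qrot; rw [if_neg (by omega), (show m+1-1 = m by omega)]
          have hQ2 : Qrot k π (m+2) = if posOf k π (k-1) < posOf k π (m+1)
              then posOf k π (m+1) - posOf k π (k-1) else posOf k π (m+1) + (k - posOf k π (k-1)) := by
            unfold Qrot; rw [if_neg (by omega), (show m+2-1 = m+1 by omega)]
          have key : (if Qrot k π (m+1+1) < Qrot k π (m+1) then (1:ℕ) else 0)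
              + (if posOf k π (k-1) < posOf k π m then 1 else 0)
              = (if posOf k π (m+1) < posOf k π m then 1 else 0)
                + (if posOf k π (k-1) < posOf k π (m+1) then 1 else 0) := by
            have f1 := posOf_bounds hπ (v := m) (by omega) (by omega)
            have f2 := posOf_bounds hπ (v := m+1) (by omega) (by omega)
            have f3 := posOf_bounds hπ (v := k-1) (by omega) (by omega)
            have ne1 := posOf_ne hπ (v := m) (w := k-1) (by omega) (by omega) (by omega) (by omega) (by omega)
            have ne2 := posOf_ne hπ (v := m+1) (w := k-1) (by omega) (by omega) (by omega) (by omega) (by omega)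
            rw [(show m+1+1 = m+2 by omega), hQ1, hQ2]
            split_ifs <;> omega
          omega
    have hfin := main (k-2) (by omega) le_rfl
    have hsplit : (∑ i ∈ Finset.Icc 1 (k-2), if posOf k π (i+1) < posOf k π i then 1 else 0)
        = (∑ i ∈ Finset.Icc 1 (k-3), if posOf k π (i+1) < posOf k π i then 1 else 0)
          + (if posOf k π (k-2+1) < posOf k π (k-2) then 1 else 0) := by
      have h := Finset.sum_Icc_succ_top (a := 1) (b := k-3) (by omega)
        (fun i => if posOf k π (i+1) < posOf k π i then 1 else 0)
      rw [(show k-3+1 = k-2 by omega)] at h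
      exact h
    rw [hfin, hsplit, (show k-2+1 = k-1 by omega), (show k-2-1 = k-3 by omega)]

lemma card_adjInv_srefl (hπ : OneLine k π) (hk : 2 ≤ k) :
    (adjInvF k (srefl k π)).card = (adjInvF k π).card := by
  rcases eq_or_lt_of_le hk with hk2 | hk3
  · have hemp : Finset.Icc 1 (k-2) = ∅ := by rw [Finset.Icc_eq_empty_iff]; omega
    rw [Finset.card_eq_zero.mpr (Finset.subset_empty.mp (hemp ▸ adjInv_subset k (srefl k π))),
        Finset.card_eq_zero.mpr (Finset.subset_empty.mp (hemp ▸ adjInv_subset k π))]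
  · have hchar1 := adjInv_char k (srefl k π) (Qsr k π) hk (Qsr_spec1 hπ hk) (Qsr_spec2 hπ hk)
    have hchar2 := adjInv_char k π (posOf k π) hk
      (fun w hw => ⟨(posOf_spec hπ hw).1, (posOf_spec hπ hw).2⟩)
      (fun p hp w hw h => posOf_uniq hπ hw hp h)
    have hS1 : adjInvF k (srefl k π)
        = (Finset.Icc 1 (k-2)).filter (fun i => Qsr k π (i+1) < Qsr k π i) := by
      ext i; rw [hchar1 i, Finset.mem_filter]
    have hS2 : adjInvF k π
        = (Finset.Icc 1 (k-2)).filter (fun i => posOf k π (i+1) < posOf k π i) := by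
      ext i; rw [hchar2 i, Finset.mem_filter]
    rw [hS1, hS2, Finset.card_filter, Finset.card_filter]
    have main : ∀ n, 1 ≤ n → n ≤ k-2 →
        (∑ i ∈ Finset.Icc 1 n, if Qsr k π (i+1) < Qsr k π i then 1 else 0)
          + (if posOf k π 1 < posOf k π (k-n) then 1 else 0)
        = (∑ i ∈ Finset.Icc (k-n) (k-2), if posOf k π (i+1) < posOf k π i then 1 else 0) + 1 := by
      intro n hn1
      induction n with
      | zero => omega
      | succ m ih =>
        intro hm
        by_cases hm0 : m = 0
        · subst hm0
          rw [Finset.Icc_self, Finset.sum_singleton]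
          rw [(show Finset.Icc (k-(0+1)) (k-2) = ∅ by rw [Finset.Icc_eq_empty_iff]; omega),
            Finset.sum_empty, (show k-(0+1) = k-1 by omega), (show (1:ℕ)+1 = 2 by rfl)]
          have hQ1 : Qsr k π 1 = posOf k π 1 := by unfold Qsr; rw [if_pos rfl]
          have hQ2 : Qsr k π 2 = if posOf k π (k-1) < posOf k π 1
              then posOf k π 1 - posOf k π (k-1) else k + posOf k π 1 - posOf k π (k-1) := by
            unfold Qsr
            rw [if_neg (by omega), (show k+1-2 = k-1 by omega)]
          have f1 := posOf_bounds hπ (v := 1) (by omega) (by omega)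
          have f3 := posOf_bounds hπ (v := k-1) (by omega) (by omega)
          have ne1 := posOf_ne hπ (v := k-1) (w := 1) (by omega) (by omega) (by omega) (by omega) (by omega)
          rw [hQ1, hQ2]
          split_ifs <;> omega
        · have hm1 : 1 ≤ m := by omega
          have ih' := ih hm1 (by omega)
          rw [Finset.sum_Icc_succ_top (by omega : 1 ≤ m+1)]
          have hsplit : (∑ i ∈ Finset.Icc (k-(m+1)) (k-2), if posOf k π (i+1) < posOf k π i then 1 else 0)
              = (if posOf k π (k-m) < posOf k π (k-(m+1)) then 1 else 0)
                + (∑ i ∈ Finset.Icc (k-m) (k-2), if posOf k π (i+1) < posOf k π i then 1 else 0) := by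
            rw [← Finset.Ioc_insert_left (show k-(m+1) ≤ k-2 by omega),
              Finset.sum_insert (by simp [Finset.mem_Ioc]),
              ← Finset.Icc_add_one_left_eq_Ioc, (show k-(m+1)+1 = k-m by omega)]
          rw [hsplit]
          have hQ1 : Qsr k π (m+1) = if posOf k π (k-m) < posOf k π 1
              then posOf k π 1 - posOf k π (k-m) else k + posOf k π 1 - posOf k π (k-m) := by
            unfold Qsr; rw [if_neg (by omega), (show k+1-(m+1) = k-m by omega)]
          have hQ2 : Qsr k π (m+2) = if posOf k π (k-(m+1)) < posOf k π 1
              then posOf k π 1 - posOf k π (k-(m+1)) else k + posOf k π 1 - posOf k π (k-(m+1)) := by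
            unfold Qsr; rw [if_neg (by omega), (show k+1-(m+2) = k-(m+1) by omega)]
          have key : (if Qsr k π (m+1+1) < Qsr k π (m+1) then (1:ℕ) else 0)
              + (if posOf k π 1 < posOf k π (k-(m+1)) then 1 else 0)
              = (if posOf k π (k-m) < posOf k π (k-(m+1)) then 1 else 0)
                + (if posOf k π 1 < posOf k π (k-m) then 1 else 0) := by
            have f1 := posOf_bounds hπ (v := 1) (by omega) (by omega)
            have f2 := posOf_bounds hπ (v := k-m) (by omega) (by omega)
            have f3 := posOf_bounds hπ (v := k-(m+1)) (by omega) (by omega)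
            have ne1 := posOf_ne hπ (v := k-m) (w := 1) (by omega) (by omega) (by omega) (by omega) (by omega)
            have ne2 := posOf_ne hπ (v := k-(m+1)) (w := 1) (by omega) (by omega) (by omega) (by omega) (by omega)
            rw [(show m+1+1 = m+2 by omega), hQ1, hQ2]
            split_ifs <;> omega
          omega
    have hfin := main (k-2) (by omega) le_rfl
    rw [(show k-(k-2) = 2 by omega)] at hfin
    have hsplit2 : (∑ i ∈ Finset.Icc 1 (k-2), if posOf k π (i+1) < posOf k π i then 1 else 0)
        = (if posOf k π 2 < posOf k π 1 then 1 else 0)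
          + (∑ i ∈ Finset.Icc 2 (k-2), if posOf k π (i+1) < posOf k π i then 1 else 0) := by
      rw [← Finset.Ioc_insert_left (show (1:ℕ) ≤ k-2 by omega),
        Finset.sum_insert (by simp [Finset.mem_Ioc]),
        ← Finset.Icc_add_one_left_eq_Ioc, (show (1:ℕ)+1 = 2 by rfl)]
    have ne1 := posOf_ne hπ (v := 2) (w := 1) (by omega) (by omega) (by omega) (by omega) (by omega)
    rw [hsplit2]
    split_ifs at hfin ⊢ <;> omega

end Aux3

section Aux4

/-- rotated gap function -/
def Grot (k q : ℕ) (π x : ℕ → ℕ) : ℕ → ℕ :=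
  fun i => if i = 1 then dval k q π x k else dval k q π x (i-1)

/-- inverse-rotated gap function -/
def Grotinv (k q : ℕ) (π' u : ℕ → ℕ) : ℕ → ℕ :=
  fun i => if i = k then dval k q π' u 1 else dval k q π' u (i+1)

/-- reflected gap function -/
def Gref (k q : ℕ) (π x : ℕ → ℕ) : ℕ → ℕ :=
  fun i => if i = 1 then dval k q π x 1 else dval k q π x (k+2-i)

def frot (k q : ℕ) (π : ℕ → ℕ) (x : ℕ → ℕ) : ℕ → ℕ := mkv k (rot k π) (Grot k q π x)
def hrot (k q : ℕ) (π : ℕ → ℕ) (u : ℕ → ℕ) : ℕ → ℕ := mkv k π (Grotinv k q (rot k π) u)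
def fsr (k q : ℕ) (π : ℕ → ℕ) (x : ℕ → ℕ) : ℕ → ℕ := mkv k (srefl k π) (Gref k q π x)
def hsr (k q : ℕ) (π : ℕ → ℕ) (u : ℕ → ℕ) : ℕ → ℕ := mkv k π (Gref k q (srefl k π) u)

lemma sum_bot_split (f : ℕ → ℕ) {b : ℕ} (h : 1 ≤ b) :
    ∑ i ∈ Finset.Icc 1 b, f i = f 1 + ∑ i ∈ Finset.Icc 2 b, f i := by
  rw [← Finset.Ioc_insert_left h, Finset.sum_insert (by simp [Finset.mem_Ioc]),
    ← Finset.Icc_add_one_left_eq_Ioc, (show (1:ℕ)+1 = 2 by rfl)]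

lemma sum_top_split (f : ℕ → ℕ) {b : ℕ} (h : 1 ≤ b) :
    ∑ i ∈ Finset.Icc 1 b, f i = ∑ i ∈ Finset.Icc 1 (b-1), f i + f b := by
  have h2 := Finset.sum_Icc_succ_top (a := 1) (b := b-1) (by omega) f
  rw [(show b-1+1 = b by omega)] at h2
  exact h2

lemma sum_Icc_split (f : ℕ → ℕ) (m b : ℕ) (h1 : m ≤ b) :
    (∑ i ∈ Finset.Icc 1 m, f i) + (∑ i ∈ Finset.Icc (m+1) b, f i) = ∑ i ∈ Finset.Icc 1 b, f i := by
  rw [← Finset.Ico_add_one_right_eq_Icc 1 m, ← Finset.Ico_add_one_right_eq_Icc (m+1) b, ← Finset.Ico_add_one_right_eq_Icc 1 b]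
  exact Finset.sum_Ico_consecutive f (by omega) (by omega)

lemma sum_shift1_partial {j : ℕ} (hj : 1 ≤ j) (A : ℕ) (D : ℕ → ℕ) :
    ∑ i ∈ Finset.Icc 1 j, (if i = 1 then A else D (i-1)) = A + ∑ i ∈ Finset.Icc 1 (j-1), D i := by
  have hsum : (∑ i ∈ Finset.Icc 2 j, if i = 1 then A else D (i-1))
      = ∑ i ∈ Finset.Icc 1 (j-1), D i := by
    have hmap : Finset.Icc 2 j = Finset.map (addLeftEmbedding 1) (Finset.Icc 1 (j-1)) := by
      rw [Finset.map_add_left_Icc]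
      congr 1 <;> omega
    rw [hmap, Finset.sum_map]
    apply Finset.sum_congr rfl
    intro i hi
    rw [Finset.mem_Icc] at hi
    have he : (addLeftEmbedding 1 i : ℕ) = 1 + i := rfl
    rw [he, if_neg (by omega), (show 1 + i - 1 = i by omega)]
  rw [sum_bot_split _ hj, hsum]
  simp

lemma sum_shift2_partial {k j : ℕ} (hk : 2 ≤ k) (hj2 : j ≤ k-1) (A : ℕ) (D : ℕ → ℕ) :
    D 1 + ∑ i ∈ Finset.Icc 1 j, (if i = k then A else D (i+1)) = ∑ i ∈ Finset.Icc 1 (j+1), D i := by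
  have hsum : (∑ i ∈ Finset.Icc 1 j, if i = k then A else D (i+1))
      = ∑ i ∈ Finset.Icc 2 (j+1), D i := by
    have hmap : Finset.Icc 2 (j+1) = Finset.map (addLeftEmbedding 1) (Finset.Icc 1 j) := by
      rw [Finset.map_add_left_Icc]
      congr 1 <;> omega
    rw [hmap, Finset.sum_map]
    apply Finset.sum_congr rfl
    intro i hi
    rw [Finset.mem_Icc] at hi
    have he : (addLeftEmbedding 1 i : ℕ) = 1 + i := rfl
    rw [he, if_neg (by omega), (show 1 + i = i + 1 by omega)]
  rw [hsum, sum_bot_split D (by omega : 1 ≤ j+1)]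

lemma sum_refl_partial {k j : ℕ} (hk : 2 ≤ k) (hj1 : 1 ≤ j) (hj2 : j ≤ k) (A : ℕ) (D : ℕ → ℕ) :
    ∑ i ∈ Finset.Icc 1 j, (if i = 1 then A else D (k+2-i)) = A + ∑ i ∈ Finset.Icc (k+2-j) k, D i := by
  have hsum : (∑ i ∈ Finset.Icc 2 j, if i = 1 then A else D (k+2-i))
      = ∑ i ∈ Finset.Icc (k+2-j) k, D i := by
    have himage : Finset.Icc (k+2-j) k = (Finset.Icc 2 j).image (fun i => k+2-i) := by
      ext m
      simp only [Finset.mem_image, Finset.mem_Icc]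
      constructor
      · rintro ⟨h1, h2⟩
        exact ⟨k+2-m, by omega, by omega⟩
      · rintro ⟨i, hi, rfl⟩
        omega
    rw [himage, Finset.sum_image (by intro a ha b hb hab; rw [Finset.mem_coe, Finset.mem_Icc] at ha hb; simp only at hab; omega)]
    apply Finset.sum_congr rfl
    intro i hi
    rw [Finset.mem_Icc] at hi
    rw [if_neg (by omega)]
  rw [sum_bot_split _ hj1, hsum]
  simp

variable {k q : ℕ} {π x u : ℕ → ℕ}

lemma cum_split (k : ℕ) (ψ G : ℕ → ℕ) (j : ℕ) :
    cumG k ψ G j = (∑ i ∈ Finset.Icc 1 j, G i) + ∑ i ∈ Finset.Icc 1 j, eps k ψ i := by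
  unfold cumG
  rw [Finset.sum_add_distrib]

lemma sum_dval_partial (hk : 2 ≤ k) (hx : x ∈ W k q π) {m : ℕ} (hm : m ≤ k) :
    (∑ i ∈ Finset.Icc 1 m, dval k q π x i) + (∑ i ∈ Finset.Icc 1 m, eps k π i)
      = xext k q x m := by
  rw [← cum_split, ← xext_cum hk hx m hm]

lemma dval_top_eq (hk : 2 ≤ k) (hq : 1 ≤ q) (hx : x ∈ W k q π) :
    dval k q π x k + x (k-1) = q - 1 := by
  have hb := hx.2.1 (k-1) (by rw [Finset.mem_Icc]; omega)
  simp only [dval]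
  rw [xext_k, xext_ne (by omega : k-1 ≠ k), eps_top k π hk]
  omega

lemma dval_one_eq (hk : 2 ≤ k) (hq : 1 ≤ q) (hx : x ∈ W k q π) :
    dval k q π x 1 = x 1 := by
  have h0 : x 0 = 0 := hx.1 0 (by simp [Finset.mem_Icc])
  simp only [dval]
  rw [xext_ne (by omega : (1:ℕ) ≠ k), (show (1:ℕ)-1 = 0 by rfl), xext_ne (by omega : (0:ℕ) ≠ k),
    h0, eps_one]
  omega

lemma sum_eps_rot (hπ : OneLine k π) (hk : 2 ≤ k) :
    ∑ i ∈ Finset.Icc 1 k, eps k (rot k π) i = ∑ i ∈ Finset.Icc 1 k, eps k π i := by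
  rw [sum_eps k (rot k π) hk, sum_eps k π hk, card_adjInv_rot hπ hk]

lemma sum_eps_srefl (hπ : OneLine k π) (hk : 2 ≤ k) :
    ∑ i ∈ Finset.Icc 1 k, eps k (srefl k π) i = ∑ i ∈ Finset.Icc 1 k, eps k π i := by
  rw [sum_eps k (srefl k π) hk, sum_eps k π hk, card_adjInv_srefl hπ hk]

/- total gap sums -/
lemma cum_rot_generic (hk : 2 ≤ k) (hq : 1 ≤ q) {ψ : ℕ → ℕ} (hx : x ∈ W k q π)
    (hE : ∑ i ∈ Finset.Icc 1 k, eps k ψ i = ∑ i ∈ Finset.Icc 1 k, eps k π i) :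
    cumG k ψ (Grot k q π x) k = q - 1 := by
  rw [cum_split]
  have e0 : ∑ i ∈ Finset.Icc 1 k, Grot k q π x i
      = ∑ i ∈ Finset.Icc 1 k, (if i = 1 then dval k q π x k else dval k q π x (i-1)) := rfl
  rw [e0, sum_shift1_partial (by omega) _ _]
  have e2 := sum_dval_partial hk hx (m := k-1) (by omega)
  rw [xext_ne (by omega : k-1 ≠ k)] at e2
  have e3 := dval_top_eq hk hq hx
  have e4 := sum_dval_partial hk hx (m := k) le_rfl
  rw [xext_k] at e4
  have e5 := sum_top_split (dval k q π x) (show 1 ≤ k by omega)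
  omega

lemma cum_rotinv_generic (hk : 2 ≤ k) (hq : 1 ≤ q) {ψ : ℕ → ℕ} (hu : u ∈ W k q π)
    (hE : ∑ i ∈ Finset.Icc 1 k, eps k ψ i = ∑ i ∈ Finset.Icc 1 k, eps k π i) :
    cumG k ψ (Grotinv k q π u) k = q - 1 := by
  rw [cum_split]
  have e0 : ∑ i ∈ Finset.Icc 1 k, Grotinv k q π u i
      = ∑ i ∈ Finset.Icc 1 (k-1), (if i = k then dval k q π u 1 else dval k q π u (i+1))
        + dval k q π u 1 := by
    rw [sum_top_split _ (show 1 ≤ k by omega)]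
    have h1 : Grotinv k q π u k = dval k q π u 1 := by
      show (if k = k then _ else _) = _
      rw [if_pos rfl]
    rw [h1]
    simp only [Grotinv]
  rw [e0]
  have e1 := sum_shift2_partial (k := k) (j := k-1) hk le_rfl (dval k q π u 1) (dval k q π u)
  rw [(show k-1+1 = k by omega)] at e1
  have e4 := sum_dval_partial hk hu (m := k) le_rfl
  rw [xext_k] at e4
  omega

lemma cum_ref_generic (hk : 2 ≤ k) (hq : 1 ≤ q) {ψ : ℕ → ℕ} (hx : x ∈ W k q π)
    (hE : ∑ i ∈ Finset.Icc 1 k, eps k ψ i = ∑ i ∈ Finset.Icc 1 k, eps k π i) :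
    cumG k ψ (Gref k q π x) k = q - 1 := by
  rw [cum_split]
  have e0 : ∑ i ∈ Finset.Icc 1 k, Gref k q π x i
      = ∑ i ∈ Finset.Icc 1 k, (if i = 1 then dval k q π x 1 else dval k q π x (k+2-i)) := rfl
  rw [e0, sum_refl_partial hk (by omega) le_rfl _ _, (show k+2-k = 2 by omega)]
  have e1 := sum_bot_split (dval k q π x) (show 1 ≤ k by omega)
  have e4 := sum_dval_partial hk hx (m := k) le_rfl
  rw [xext_k] at e4
  omega

/- membership -/
lemma frot_mem (hπ : OneLine k π) (hk : 2 ≤ k) (hq : 1 ≤ q) (hx : x ∈ W k q π) :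
    frot k q π x ∈ W k q (rot k π) :=
  mkv_mem_W hk hq _ _ (cum_rot_generic hk hq hx (sum_eps_rot hπ hk))

lemma hrot_mem (hπ : OneLine k π) (hk : 2 ≤ k) (hq : 1 ≤ q) (hu : u ∈ W k q (rot k π)) :
    hrot k q π u ∈ W k q π :=
  mkv_mem_W hk hq _ _ (cum_rotinv_generic hk hq hu (sum_eps_rot hπ hk).symm)

lemma fsr_mem (hπ : OneLine k π) (hk : 2 ≤ k) (hq : 1 ≤ q) (hx : x ∈ W k q π) :
    fsr k q π x ∈ W k q (srefl k π) :=
  mkv_mem_W hk hq _ _ (cum_ref_generic hk hq hx (sum_eps_srefl hπ hk))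

lemma hsr_mem (hπ : OneLine k π) (hk : 2 ≤ k) (hq : 1 ≤ q) (hu : u ∈ W k q (srefl k π)) :
    hsr k q π u ∈ W k q π :=
  mkv_mem_W hk hq _ _ (cum_ref_generic hk hq hu (sum_eps_srefl hπ hk).symm)

/- inverses -/
lemma hrot_frot (hπ : OneLine k π) (hk : 2 ≤ k) (hq : 1 ≤ q) (hx : x ∈ W k q π) :
    hrot k q π (frot k q π x) = x := by
  have hcum := cum_rot_generic hk hq hx (sum_eps_rot hπ hk)
  have hd := dval_mkv hk hq (rot k π) (Grot k q π x) hcum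
  unfold hrot frot
  rw [mkv_congr k π (Grotinv k q (rot k π) (mkv k (rot k π) (Grot k q π x))) (dval k q π x) ?_]
  · exact mkv_dval hk hq hx
  · intro i hi
    rw [Finset.mem_Icc] at hi
    show (if i = k then _ else dval k q (rot k π) (mkv k (rot k π) (Grot k q π x)) (i+1)) = _
    rw [if_neg (by omega), hd (i+1) (by rw [Finset.mem_Icc]; omega)]
    show (if i + 1 = 1 then _ else dval k q π x (i+1-1)) = _
    rw [if_neg (by omega), (show i+1-1 = i by omega)]

lemma frot_hrot (hπ : OneLine k π) (hk : 2 ≤ k) (hq : 1 ≤ q) (hu : u ∈ W k q (rot k π)) :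
    frot k q π (hrot k q π u) = u := by
  have hcum := cum_rotinv_generic hk hq hu (sum_eps_rot hπ hk).symm
  have hd := dval_mkv hk hq π (Grotinv k q (rot k π) u) hcum
  unfold frot hrot
  rw [mkv_congr k (rot k π) (Grot k q π (mkv k π (Grotinv k q (rot k π) u)))
    (dval k q (rot k π) u) ?_]
  · exact mkv_dval hk hq hu
  · intro i hi
    rw [Finset.mem_Icc] at hi
    by_cases hi1 : i = 1
    · subst hi1
      show (if (1:ℕ) = 1 then dval k q π (mkv k π (Grotinv k q (rot k π) u)) k else _) = _
      rw [if_pos rfl, hd k (by rw [Finset.mem_Icc]; omega)]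
      show (if k = k then dval k q (rot k π) u 1 else _) = _
      rw [if_pos rfl]
    · show (if i = 1 then _ else dval k q π (mkv k π (Grotinv k q (rot k π) u)) (i-1)) = _
      rw [if_neg hi1, hd (i-1) (by rw [Finset.mem_Icc]; omega)]
      show (if i - 1 = k then _ else dval k q (rot k π) u (i-1+1)) = _
      rw [if_neg (by omega), (show i-1+1 = i by omega)]

lemma hsr_fsr (hπ : OneLine k π) (hk : 2 ≤ k) (hq : 1 ≤ q) (hx : x ∈ W k q π) :
    hsr k q π (fsr k q π x) = x := by
  have hcum := cum_ref_generic hk hq hx (sum_eps_srefl hπ hk)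
  have hd := dval_mkv hk hq (srefl k π) (Gref k q π x) hcum
  unfold hsr fsr
  rw [mkv_congr k π (Gref k q (srefl k π) (mkv k (srefl k π) (Gref k q π x))) (dval k q π x) ?_]
  · exact mkv_dval hk hq hx
  · intro i hi
    rw [Finset.mem_Icc] at hi
    by_cases hi1 : i = 1
    · subst hi1
      show (if (1:ℕ) = 1 then dval k q (srefl k π) (mkv k (srefl k π) (Gref k q π x)) 1 else _) = _
      rw [if_pos rfl, hd 1 (by rw [Finset.mem_Icc]; omega)]
      show (if (1:ℕ) = 1 then dval k q π x 1 else _) = _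
      rw [if_pos rfl]
    · show (if i = 1 then _ else dval k q (srefl k π) (mkv k (srefl k π) (Gref k q π x)) (k+2-i)) = _
      rw [if_neg hi1, hd (k+2-i) (by rw [Finset.mem_Icc]; omega)]
      show (if k+2-i = 1 then _ else dval k q π x (k+2-(k+2-i))) = _
      rw [if_neg (by omega), (show k+2-(k+2-i) = i by omega)]

lemma fsr_hsr (hπ : OneLine k π) (hk : 2 ≤ k) (hq : 1 ≤ q) (hu : u ∈ W k q (srefl k π)) :
    fsr k q π (hsr k q π u) = u := by
  have hcum := cum_ref_generic hk hq hu (sum_eps_srefl hπ hk).symm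
  have hd := dval_mkv hk hq π (Gref k q (srefl k π) u) hcum
  unfold fsr hsr
  rw [mkv_congr k (srefl k π) (Gref k q π (mkv k π (Gref k q (srefl k π) u)))
    (dval k q (srefl k π) u) ?_]
  · exact mkv_dval hk hq hu
  · intro i hi
    rw [Finset.mem_Icc] at hi
    by_cases hi1 : i = 1
    · subst hi1
      show (if (1:ℕ) = 1 then dval k q π (mkv k π (Gref k q (srefl k π) u)) 1 else _) = _
      rw [if_pos rfl, hd 1 (by rw [Finset.mem_Icc]; omega)]
      show (if (1:ℕ) = 1 then dval k q (srefl k π) u 1 else _) = _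
      rw [if_pos rfl]
    · show (if i = 1 then _ else dval k q π (mkv k π (Gref k q (srefl k π) u)) (k+2-i)) = _
      rw [if_neg hi1, hd (k+2-i) (by rw [Finset.mem_Icc]; omega)]
      show (if k+2-i = 1 then _ else dval k q (srefl k π) u (k+2-(k+2-i))) = _
      rw [if_neg (by omega), (show k+2-(k+2-i) = i by omega)]

/- labels -/
lemma labels_frot (hπ : OneLine k π) (hk : 2 ≤ k) (hq : 1 ≤ q) (hx : x ∈ W k q π) :
    labels k q (rot k π) (frot k q π x) = (labels k q π x).image (rotV k) := by
  have hcum := cum_rot_generic hk hq hx (sum_eps_rot hπ hk)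
  unfold frot
  rw [labels_mkv hk hq _ _ hcum, labels_eq_filter hk hq hx]
  ext j
  simp only [Finset.mem_image, Finset.mem_filter, Finset.mem_Icc]
  constructor
  · rintro ⟨⟨hj1, hj2⟩, hG⟩
    by_cases hj : j = 1
    · subst hj
      refine ⟨k, ⟨⟨by omega, le_rfl⟩, ?_⟩, ?_⟩
      · have : Grot k q π x 1 = dval k q π x k := by
          show (if (1:ℕ) = 1 then _ else _) = _; rw [if_pos rfl]
        rw [this] at hG
        exact hG
      · unfold rotV; rw [if_neg (by omega)]
    · refine ⟨j-1, ⟨⟨by omega, by omega⟩, ?_⟩, ?_⟩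
      · have : Grot k q π x j = dval k q π x (j-1) := by
          show (if j = 1 then _ else _) = _; rw [if_neg hj]
        rw [this] at hG
        exact hG
      · unfold rotV; rw [if_pos (by omega)]; omega
  · rintro ⟨i, ⟨⟨hi1, hi2⟩, hd⟩, hij⟩
    unfold rotV at hij
    by_cases hik : i < k
    · rw [if_pos hik] at hij
      refine ⟨⟨by omega, by omega⟩, ?_⟩
      have : Grot k q π x j = dval k q π x (j-1) := by
        show (if j = 1 then _ else _) = _; rw [if_neg (by omega)]
      rw [this, (show j - 1 = i by omega)]
      exact hd
    · rw [if_neg hik] at hij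
      refine ⟨⟨by omega, by omega⟩, ?_⟩
      have hGx : Grot k q π x j = dval k q π x k := by
        show (if j = 1 then _ else _) = _; rw [if_pos (by omega)]
      rw [hGx]
      rwa [(show i = k by omega)] at hd

lemma labels_fsr (hπ : OneLine k π) (hk : 2 ≤ k) (hq : 1 ≤ q) (hx : x ∈ W k q π) :
    labels k q (srefl k π) (fsr k q π x) = (labels k q π x).image (sreflV k) := by
  have hcum := cum_ref_generic hk hq hx (sum_eps_srefl hπ hk)
  unfold fsr
  rw [labels_mkv hk hq _ _ hcum, labels_eq_filter hk hq hx]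
  ext j
  simp only [Finset.mem_image, Finset.mem_filter, Finset.mem_Icc]
  constructor
  · rintro ⟨⟨hj1, hj2⟩, hG⟩
    by_cases hj : j = 1
    · subst hj
      refine ⟨1, ⟨⟨le_rfl, by omega⟩, ?_⟩, ?_⟩
      · have : Gref k q π x 1 = dval k q π x 1 := by
          show (if (1:ℕ) = 1 then _ else _) = _; rw [if_pos rfl]
        rw [this] at hG
        exact hG
      · unfold sreflV; rw [if_pos rfl]
    · refine ⟨k+2-j, ⟨⟨by omega, by omega⟩, ?_⟩, ?_⟩
      · have : Gref k q π x j = dval k q π x (k+2-j) := by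
          show (if j = 1 then _ else _) = _; rw [if_neg hj]
        rw [this] at hG
        exact hG
      · unfold sreflV; rw [if_neg (by omega)]; omega
  · rintro ⟨i, ⟨⟨hi1, hi2⟩, hd⟩, hij⟩
    unfold sreflV at hij
    by_cases hi : i = 1
    · subst hi
      rw [if_pos rfl] at hij
      refine ⟨⟨by omega, by omega⟩, ?_⟩
      have : Gref k q π x j = dval k q π x 1 := by
        show (if j = 1 then _ else _) = _; rw [if_pos (by omega)]
      rw [this]
      exact hd
    · rw [if_neg hi] at hij
      refine ⟨⟨by omega, by omega⟩, ?_⟩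
      have : Gref k q π x j = dval k q π x (k+2-j) := by
        show (if j = 1 then _ else _) = _; rw [if_neg (by omega)]
      rw [this, (show k+2-j = i by omega)]
      exact hd

end Aux4

section Aux5
variable {k q : ℕ} {π : ℕ → ℕ}

lemma mem_image_Icc {ψ : ℕ → ℕ} {a b j : ℕ} :
    j ∈ (Finset.Icc a b).image ψ ↔ ∃ p, (a ≤ p ∧ p ≤ b) ∧ ψ p = j := by
  simp [Finset.mem_image, Finset.mem_Icc]

lemma R1 (hπ : OneLine k π) (hk : 2 ≤ k) {a b : ℕ} (ha : 1 ≤ a) (hab : a < b) (hb : b ≤ k)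
    (hT : k-1 ∉ (Finset.Icc a (b-1)).image π) :
    ∃ a' b', 1 ≤ a' ∧ a' < b' ∧ b' ≤ k ∧
      ∀ j, 1 ≤ j → j ≤ k-1 →
        (j ∈ (Finset.Icc a' (b'-1)).image (rot k π) ↔ j-1 ∈ (Finset.Icc a (b-1)).image π) := by
  have htm := posOf_bounds hπ (v := k-1) (by omega) (by omega)
  have htn : ¬ (a ≤ posOf k π (k-1) ∧ posOf k π (k-1) ≤ b-1) := by
    rintro ⟨h1, h2⟩
    exact hT (mem_image_Icc.mpr ⟨posOf k π (k-1), ⟨h1, h2⟩, htm.2.2⟩)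
  by_cases hcase : posOf k π (k-1) < a
  · refine ⟨a - posOf k π (k-1), b - posOf k π (k-1), by omega, by omega, by omega, ?_⟩
    intro j hj1 hj2
    constructor
    · intro hjm
      obtain ⟨p, hp, hpj⟩ := mem_image_Icc.mp hjm
      have hpI : p ∈ Finset.Icc 1 (k-1) := by rw [Finset.mem_Icc]; omega
      rw [rot_of_lt hpI (by omega)] at hpj
      have harg : posOf k π (k-1) + p ∈ Finset.Icc 1 (k-1) := by rw [Finset.mem_Icc]; omega
      have hπm := pi_mem hπ harg
      rw [Finset.mem_Icc] at hπm
      exact mem_image_Icc.mpr ⟨posOf k π (k-1) + p, ⟨by omega, by omega⟩, by omega⟩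
    · intro hjm
      obtain ⟨r, hr, hrj⟩ := mem_image_Icc.mp hjm
      have hrI : r ∈ Finset.Icc 1 (k-1) := by rw [Finset.mem_Icc]; omega
      have hπm := pi_mem hπ hrI
      rw [Finset.mem_Icc] at hπm
      refine mem_image_Icc.mpr ⟨r - posOf k π (k-1), ⟨by omega, by omega⟩, ?_⟩
      rw [rot_of_lt (by rw [Finset.mem_Icc]; omega) (by omega),
        (show posOf k π (k-1) + (r - posOf k π (k-1)) = r by omega)]
      omega
  · -- b ≤ posOf k π (k-1)
    have hbt : b ≤ posOf k π (k-1) := by omega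
    refine ⟨a + (k - posOf k π (k-1)), b + (k - posOf k π (k-1)), by omega, by omega, by omega, ?_⟩
    intro j hj1 hj2
    constructor
    · intro hjm
      obtain ⟨p, hp, hpj⟩ := mem_image_Icc.mp hjm
      have hpI : p ∈ Finset.Icc 1 (k-1) := by rw [Finset.mem_Icc]; omega
      rw [rot_of_gt hpI (by omega)] at hpj
      have harg : p - (k - posOf k π (k-1)) ∈ Finset.Icc 1 (k-1) := by rw [Finset.mem_Icc]; omega
      have hπm := pi_mem hπ harg
      rw [Finset.mem_Icc] at hπm
      exact mem_image_Icc.mpr ⟨p - (k - posOf k π (k-1)), ⟨by omega, by omega⟩, by omega⟩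
    · intro hjm
      obtain ⟨r, hr, hrj⟩ := mem_image_Icc.mp hjm
      have hrI : r ∈ Finset.Icc 1 (k-1) := by rw [Finset.mem_Icc]; omega
      have hπm := pi_mem hπ hrI
      rw [Finset.mem_Icc] at hπm
      refine mem_image_Icc.mpr ⟨r + (k - posOf k π (k-1)), ⟨by omega, by omega⟩, ?_⟩
      rw [rot_of_gt (by rw [Finset.mem_Icc]; omega) (by omega),
        (show r + (k - posOf k π (k-1)) - (k - posOf k π (k-1)) = r by omega)]
      omega

lemma R2 (hπ : OneLine k π) (hk : 2 ≤ k) {a b : ℕ} (ha : 1 ≤ a) (hab : a < b) (hb : b ≤ k)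
    (hT : k-1 ∈ (Finset.Icc a (b-1)).image π) :
    ∃ a' b', 1 ≤ a' ∧ a' < b' ∧ b' ≤ k ∧
      ∀ j, 1 ≤ j → j ≤ k-1 →
        (j ∈ (Finset.Icc a' (b'-1)).image (rot k π) ↔ j-1 ∉ (Finset.Icc a (b-1)).image π) := by
  have htm := posOf_bounds hπ (v := k-1) (by omega) (by omega)
  have hta : a ≤ posOf k π (k-1) ∧ posOf k π (k-1) ≤ b-1 := by
    obtain ⟨r, hr, hrv⟩ := mem_image_Icc.mp hT
    have : r = posOf k π (k-1) :=
      posOf_uniq hπ (by rw [Finset.mem_Icc]; omega) (by rw [Finset.mem_Icc]; omega) hrv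
    omega
  refine ⟨b - posOf k π (k-1), a + (k - posOf k π (k-1)), by omega, by omega, by omega, ?_⟩
  intro j hj1 hj2
  constructor
  · intro hjm
    obtain ⟨p, hp, hpj⟩ := mem_image_Icc.mp hjm
    have hpI : p ∈ Finset.Icc 1 (k-1) := by rw [Finset.mem_Icc]; omega
    rcases lt_trichotomy p (k - posOf k π (k-1)) with hc | hc | hc
    · rw [rot_of_lt hpI hc] at hpj
      have harg : posOf k π (k-1) + p ∈ Finset.Icc 1 (k-1) := by rw [Finset.mem_Icc]; omega
      have hπm := pi_mem hπ harg
      rw [Finset.mem_Icc] at hπm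
      intro hmem
      obtain ⟨r, hr, hrj⟩ := mem_image_Icc.mp hmem
      have : r = posOf k π (k-1) + p := by
        apply pi_inj hπ (by rw [Finset.mem_Icc]; omega) harg
        omega
      omega
    · rw [rot_of_eq hpI hc] at hpj
      intro hmem
      obtain ⟨r, hr, hrj⟩ := mem_image_Icc.mp hmem
      have hπm := pi_mem hπ (show r ∈ Finset.Icc 1 (k-1) by rw [Finset.mem_Icc]; omega)
      rw [Finset.mem_Icc] at hπm
      omega
    · rw [rot_of_gt hpI hc] at hpj
      have harg : p - (k - posOf k π (k-1)) ∈ Finset.Icc 1 (k-1) := by rw [Finset.mem_Icc]; omega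
      have hπm := pi_mem hπ harg
      rw [Finset.mem_Icc] at hπm
      intro hmem
      obtain ⟨r, hr, hrj⟩ := mem_image_Icc.mp hmem
      have : r = p - (k - posOf k π (k-1)) := by
        apply pi_inj hπ (by rw [Finset.mem_Icc]; omega) harg
        omega
      omega
  · intro hmem
    by_cases hj : j = 1
    · refine mem_image_Icc.mpr ⟨k - posOf k π (k-1), ⟨by omega, by omega⟩, ?_⟩
      rw [rot_of_eq (by rw [Finset.mem_Icc]; omega) rfl, hj]
    · obtain ⟨hr1, hr2, hrv⟩ := posOf_bounds hπ (v := j-1) (by omega) (by omega)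
      have hrt : posOf k π (j-1) ≠ posOf k π (k-1) :=
        posOf_ne hπ (by omega) (by omega) (by omega) (by omega) (by omega)
      have hrn : ¬ (a ≤ posOf k π (j-1) ∧ posOf k π (j-1) ≤ b-1) := by
        rintro ⟨h1, h2⟩
        exact hmem (mem_image_Icc.mpr ⟨posOf k π (j-1), ⟨h1, h2⟩, hrv⟩)
      by_cases hrb : b ≤ posOf k π (j-1)
      · refine mem_image_Icc.mpr ⟨posOf k π (j-1) - posOf k π (k-1), ⟨by omega, by omega⟩, ?_⟩
        rw [rot_of_lt (by rw [Finset.mem_Icc]; omega) (by omega),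
          (show posOf k π (k-1) + (posOf k π (j-1) - posOf k π (k-1)) = posOf k π (j-1) by omega),
          hrv]
        omega
      · refine mem_image_Icc.mpr ⟨posOf k π (j-1) + (k - posOf k π (k-1)), ⟨by omega, by omega⟩, ?_⟩
        rw [rot_of_gt (by rw [Finset.mem_Icc]; omega) (by omega),
          (show posOf k π (j-1) + (k - posOf k π (k-1)) - (k - posOf k π (k-1))
            = posOf k π (j-1) by omega), hrv]
        omega

lemma R3 (hπ : OneLine k π) (hk : 2 ≤ k) {a' b' : ℕ} (ha : 1 ≤ a') (hab : a' < b') (hb : b' ≤ k)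
    (hT : (1:ℕ) ∉ (Finset.Icc a' (b'-1)).image (rot k π)) :
    ∃ a b, 1 ≤ a ∧ a < b ∧ b ≤ k ∧
      ∀ j, 1 ≤ j → j ≤ k-1 →
        (j ∈ (Finset.Icc a (b-1)).image π ↔ j+1 ∈ (Finset.Icc a' (b'-1)).image (rot k π)) := by
  have htm := posOf_bounds hπ (v := k-1) (by omega) (by omega)
  have htn : ¬ (a' ≤ k - posOf k π (k-1) ∧ k - posOf k π (k-1) ≤ b'-1) := by
    rintro ⟨h1, h2⟩
    exact hT (mem_image_Icc.mpr ⟨k - posOf k π (k-1), ⟨h1, h2⟩,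
      rot_of_eq (by rw [Finset.mem_Icc]; omega) rfl⟩)
  by_cases hcase : b'-1 < k - posOf k π (k-1)
  · refine ⟨posOf k π (k-1) + a', posOf k π (k-1) + b', by omega, by omega, by omega, ?_⟩
    intro j hj1 hj2
    constructor
    · intro hjm
      obtain ⟨r, hr, hrj⟩ := mem_image_Icc.mp hjm
      refine mem_image_Icc.mpr ⟨r - posOf k π (k-1), ⟨by omega, by omega⟩, ?_⟩
      rw [rot_of_lt (by rw [Finset.mem_Icc]; omega) (by omega),
        (show posOf k π (k-1) + (r - posOf k π (k-1)) = r by omega), hrj]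
    · intro hjm
      obtain ⟨p, hp, hpj⟩ := mem_image_Icc.mp hjm
      have hpI : p ∈ Finset.Icc 1 (k-1) := by rw [Finset.mem_Icc]; omega
      rw [rot_of_lt hpI (by omega)] at hpj
      exact mem_image_Icc.mpr ⟨posOf k π (k-1) + p, ⟨by omega, by omega⟩, by omega⟩
  · have hcase2 : k - posOf k π (k-1) < a' := by omega
    refine ⟨a' - (k - posOf k π (k-1)), b' - (k - posOf k π (k-1)), by omega, by omega, by omega, ?_⟩
    intro j hj1 hj2
    constructor
    · intro hjm
      obtain ⟨r, hr, hrj⟩ := mem_image_Icc.mp hjm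
      refine mem_image_Icc.mpr ⟨r + (k - posOf k π (k-1)), ⟨by omega, by omega⟩, ?_⟩
      rw [rot_of_gt (by rw [Finset.mem_Icc]; omega) (by omega),
        (show r + (k - posOf k π (k-1)) - (k - posOf k π (k-1)) = r by omega), hrj]
    · intro hjm
      obtain ⟨p, hp, hpj⟩ := mem_image_Icc.mp hjm
      have hpI : p ∈ Finset.Icc 1 (k-1) := by rw [Finset.mem_Icc]; omega
      rw [rot_of_gt hpI (by omega)] at hpj
      exact mem_image_Icc.mpr ⟨p - (k - posOf k π (k-1)), ⟨by omega, by omega⟩, by omega⟩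

lemma R4 (hπ : OneLine k π) (hk : 2 ≤ k) {a' b' : ℕ} (ha : 1 ≤ a') (hab : a' < b') (hb : b' ≤ k)
    (hT : (1:ℕ) ∈ (Finset.Icc a' (b'-1)).image (rot k π)) :
    ∃ a b, 1 ≤ a ∧ a < b ∧ b ≤ k ∧
      ∀ j, 1 ≤ j → j ≤ k-1 →
        (j ∈ (Finset.Icc a (b-1)).image π ↔ j+1 ∉ (Finset.Icc a' (b'-1)).image (rot k π)) := by
  have htm := posOf_bounds hπ (v := k-1) (by omega) (by omega)
  have hta : a' ≤ k - posOf k π (k-1) ∧ k - posOf k π (k-1) ≤ b'-1 := by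
    obtain ⟨p, hp, hpv⟩ := mem_image_Icc.mp hT
    have hpI : p ∈ Finset.Icc 1 (k-1) := by rw [Finset.mem_Icc]; omega
    have : p = k - posOf k π (k-1) := by
      rcases lt_trichotomy p (k - posOf k π (k-1)) with hc | hc | hc
      · rw [rot_of_lt hpI hc] at hpv
        have hπm := pi_mem hπ (show posOf k π (k-1) + p ∈ Finset.Icc 1 (k-1) by
          rw [Finset.mem_Icc]; omega)
        rw [Finset.mem_Icc] at hπm
        omega
      · exact hc
      · rw [rot_of_gt hpI hc] at hpv
        have hπm := pi_mem hπ (show p - (k - posOf k π (k-1)) ∈ Finset.Icc 1 (k-1) by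
          rw [Finset.mem_Icc]; omega)
        rw [Finset.mem_Icc] at hπm
        omega
    omega
  refine ⟨b' - (k - posOf k π (k-1)), posOf k π (k-1) + a', by omega, by omega, by omega, ?_⟩
  intro j hj1 hj2
  constructor
  · intro hjm
    obtain ⟨r, hr, hrj⟩ := mem_image_Icc.mp hjm
    have hrI : r ∈ Finset.Icc 1 (k-1) := by rw [Finset.mem_Icc]; omega
    have hπr := pi_mem hπ hrI
    rw [Finset.mem_Icc] at hπr
    intro hmem
    obtain ⟨p, hp, hpj⟩ := mem_image_Icc.mp hmem
    have hpI : p ∈ Finset.Icc 1 (k-1) := by rw [Finset.mem_Icc]; omega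
    rcases lt_trichotomy p (k - posOf k π (k-1)) with hc | hc | hc
    · rw [rot_of_lt hpI hc] at hpj
      have harg : posOf k π (k-1) + p ∈ Finset.Icc 1 (k-1) := by rw [Finset.mem_Icc]; omega
      have : r = posOf k π (k-1) + p := by
        apply pi_inj hπ hrI harg
        omega
      omega
    · rw [rot_of_eq hpI hc] at hpj
      omega
    · rw [rot_of_gt hpI hc] at hpj
      have harg : p - (k - posOf k π (k-1)) ∈ Finset.Icc 1 (k-1) := by rw [Finset.mem_Icc]; omega
      have : r = p - (k - posOf k π (k-1)) := by
        apply pi_inj hπ hrI harg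
        omega
      omega
  · intro hmem
    obtain ⟨hr1, hr2, hrv⟩ := posOf_bounds hπ (v := j) (by omega) (by omega)
    by_contra hcon
    rw [mem_image_Icc] at hcon
    push_neg at hcon
    have hout : ¬ (b' - (k - posOf k π (k-1)) ≤ posOf k π j
        ∧ posOf k π j ≤ posOf k π (k-1) + a' - 1) := by
      rintro ⟨h1, h2⟩
      exact (hcon (posOf k π j) ⟨h1, h2⟩) hrv
    by_cases hrb : posOf k π j + (k - posOf k π (k-1)) ≤ b'-1
    · apply hmem
      refine mem_image_Icc.mpr ⟨posOf k π j + (k - posOf k π (k-1)), ⟨by omega, by omega⟩, ?_⟩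
      rw [rot_of_gt (by rw [Finset.mem_Icc]; omega) (by omega),
        (show posOf k π j + (k - posOf k π (k-1)) - (k - posOf k π (k-1)) = posOf k π j by omega),
        hrv]
    · apply hmem
      refine mem_image_Icc.mpr ⟨posOf k π j - posOf k π (k-1), ⟨by omega, by omega⟩, ?_⟩
      rw [rot_of_lt (by rw [Finset.mem_Icc]; omega) (by omega),
        (show posOf k π (k-1) + (posOf k π j - posOf k π (k-1)) = posOf k π j by omega), hrv]

end Aux5

section Aux6
variable {k q : ℕ} {π : ℕ → ℕ}

lemma S1 (hπ : OneLine k π) (hk : 2 ≤ k) {a b : ℕ} (ha : 1 ≤ a) (hab : a < b) (hb : b ≤ k)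
    (hT : (1:ℕ) ∉ (Finset.Icc a (b-1)).image π) :
    ∃ a' b', 1 ≤ a' ∧ a' < b' ∧ b' ≤ k ∧
      ∀ j, 1 ≤ j → j ≤ k-1 →
        (j ∈ (Finset.Icc a' (b'-1)).image (srefl k π) ↔ k+1-j ∈ (Finset.Icc a (b-1)).image π) := by
  have hio := posOf_bounds hπ (v := 1) (by omega) (by omega)
  have hin : ¬ (a ≤ posOf k π 1 ∧ posOf k π 1 ≤ b-1) := by
    rintro ⟨h1, h2⟩
    exact hT (mem_image_Icc.mpr ⟨posOf k π 1, ⟨h1, h2⟩, hio.2.2⟩)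
  by_cases hcase : b-1 < posOf k π 1
  · refine ⟨posOf k π 1 - b + 1, posOf k π 1 - a + 1, by omega, by omega, by omega, ?_⟩
    intro j hj1 hj2
    constructor
    · intro hjm
      obtain ⟨p, hp, hpj⟩ := mem_image_Icc.mp hjm
      have hpI : p ∈ Finset.Icc 1 (k-1) := by rw [Finset.mem_Icc]; omega
      rw [srefl_of_lt hpI (by omega)] at hpj
      have harg : posOf k π 1 - p ∈ Finset.Icc 1 (k-1) := by rw [Finset.mem_Icc]; omega
      have hπm := pi_mem hπ harg
      rw [Finset.mem_Icc] at hπm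
      exact mem_image_Icc.mpr ⟨posOf k π 1 - p, ⟨by omega, by omega⟩, by omega⟩
    · intro hjm
      obtain ⟨r, hr, hrj⟩ := mem_image_Icc.mp hjm
      have hrI : r ∈ Finset.Icc 1 (k-1) := by rw [Finset.mem_Icc]; omega
      have hπm := pi_mem hπ hrI
      rw [Finset.mem_Icc] at hπm
      refine mem_image_Icc.mpr ⟨posOf k π 1 - r, ⟨by omega, by omega⟩, ?_⟩
      rw [srefl_of_lt (by rw [Finset.mem_Icc]; omega) (by omega),
        (show posOf k π 1 - (posOf k π 1 - r) = r by omega)]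
      omega
  · have hba : posOf k π 1 < a := by omega
    refine ⟨k + posOf k π 1 - b + 1, k + posOf k π 1 - a + 1, by omega, by omega, by omega, ?_⟩
    intro j hj1 hj2
    constructor
    · intro hjm
      obtain ⟨p, hp, hpj⟩ := mem_image_Icc.mp hjm
      have hpI : p ∈ Finset.Icc 1 (k-1) := by rw [Finset.mem_Icc]; omega
      rw [srefl_of_gt hpI (by omega)] at hpj
      have harg : k + posOf k π 1 - p ∈ Finset.Icc 1 (k-1) := by rw [Finset.mem_Icc]; omega
      have hπm := pi_mem hπ harg
      rw [Finset.mem_Icc] at hπm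
      exact mem_image_Icc.mpr ⟨k + posOf k π 1 - p, ⟨by omega, by omega⟩, by omega⟩
    · intro hjm
      obtain ⟨r, hr, hrj⟩ := mem_image_Icc.mp hjm
      have hrI : r ∈ Finset.Icc 1 (k-1) := by rw [Finset.mem_Icc]; omega
      have hπm := pi_mem hπ hrI
      rw [Finset.mem_Icc] at hπm
      refine mem_image_Icc.mpr ⟨k + posOf k π 1 - r, ⟨by omega, by omega⟩, ?_⟩
      rw [srefl_of_gt (by rw [Finset.mem_Icc]; omega) (by omega),
        (show k + posOf k π 1 - (k + posOf k π 1 - r) = r by omega)]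
      omega

lemma S2 (hπ : OneLine k π) (hk : 2 ≤ k) {a b : ℕ} (ha : 1 ≤ a) (hab : a < b) (hb : b ≤ k)
    (hT : (1:ℕ) ∈ (Finset.Icc a (b-1)).image π) :
    ∃ a' b', 1 ≤ a' ∧ a' < b' ∧ b' ≤ k ∧
      ∀ j, 1 ≤ j → j ≤ k-1 →
        (j ∈ (Finset.Icc a' (b'-1)).image (srefl k π) ↔ k+1-j ∉ (Finset.Icc a (b-1)).image π) := by
  have hio := posOf_bounds hπ (v := 1) (by omega) (by omega)
  have hia : a ≤ posOf k π 1 ∧ posOf k π 1 ≤ b-1 := by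
    obtain ⟨r, hr, hrv⟩ := mem_image_Icc.mp hT
    have : r = posOf k π 1 :=
      posOf_uniq hπ (by rw [Finset.mem_Icc]; omega) (by rw [Finset.mem_Icc]; omega) hrv
    omega
  refine ⟨posOf k π 1 - a + 1, k + posOf k π 1 - b + 1, by omega, by omega, by omega, ?_⟩
  intro j hj1 hj2
  constructor
  · intro hjm
    obtain ⟨p, hp, hpj⟩ := mem_image_Icc.mp hjm
    have hpI : p ∈ Finset.Icc 1 (k-1) := by rw [Finset.mem_Icc]; omega
    rcases lt_trichotomy p (posOf k π 1) with hc | hc | hc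
    · rw [srefl_of_lt hpI hc] at hpj
      have harg : posOf k π 1 - p ∈ Finset.Icc 1 (k-1) := by rw [Finset.mem_Icc]; omega
      have hπm := pi_mem hπ harg
      rw [Finset.mem_Icc] at hπm
      intro hmem
      obtain ⟨r, hr, hrj⟩ := mem_image_Icc.mp hmem
      have : r = posOf k π 1 - p := by
        apply pi_inj hπ (by rw [Finset.mem_Icc]; omega) harg
        omega
      omega
    · rw [srefl_of_eq hpI hc] at hpj
      intro hmem
      obtain ⟨r, hr, hrj⟩ := mem_image_Icc.mp hmem
      have hπm := pi_mem hπ (show r ∈ Finset.Icc 1 (k-1) by rw [Finset.mem_Icc]; omega)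
      rw [Finset.mem_Icc] at hπm
      omega
    · rw [srefl_of_gt hpI hc] at hpj
      have harg : k + posOf k π 1 - p ∈ Finset.Icc 1 (k-1) := by rw [Finset.mem_Icc]; omega
      have hπm := pi_mem hπ harg
      rw [Finset.mem_Icc] at hπm
      intro hmem
      obtain ⟨r, hr, hrj⟩ := mem_image_Icc.mp hmem
      have : r = k + posOf k π 1 - p := by
        apply pi_inj hπ (by rw [Finset.mem_Icc]; omega) harg
        omega
      omega
  · intro hmem
    by_cases hj : j = 1
    · refine mem_image_Icc.mpr ⟨posOf k π 1, ⟨by omega, by omega⟩, ?_⟩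
      rw [srefl_of_eq (by rw [Finset.mem_Icc]; omega) rfl, hj]
    · obtain ⟨hr1, hr2, hrv⟩ := posOf_bounds hπ (v := k+1-j) (by omega) (by omega)
      have hrt : posOf k π (k+1-j) ≠ posOf k π 1 :=
        posOf_ne hπ (by omega) (by omega) (by omega) (by omega) (by omega)
      have hrn : ¬ (a ≤ posOf k π (k+1-j) ∧ posOf k π (k+1-j) ≤ b-1) := by
        rintro ⟨h1, h2⟩
        exact hmem (mem_image_Icc.mpr ⟨posOf k π (k+1-j), ⟨h1, h2⟩, hrv⟩)
      by_cases hrb : b ≤ posOf k π (k+1-j)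
      · refine mem_image_Icc.mpr ⟨k + posOf k π 1 - posOf k π (k+1-j), ⟨by omega, by omega⟩, ?_⟩
        rw [srefl_of_gt (by rw [Finset.mem_Icc]; omega) (by omega),
          (show k + posOf k π 1 - (k + posOf k π 1 - posOf k π (k+1-j))
            = posOf k π (k+1-j) by omega), hrv]
        omega
      · refine mem_image_Icc.mpr ⟨posOf k π 1 - posOf k π (k+1-j), ⟨by omega, by omega⟩, ?_⟩
        rw [srefl_of_lt (by rw [Finset.mem_Icc]; omega) (by omega),
          (show posOf k π 1 - (posOf k π 1 - posOf k π (k+1-j)) = posOf k π (k+1-j) by omega), hrv]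
        omega

lemma S3 (hπ : OneLine k π) (hk : 2 ≤ k) {a' b' : ℕ} (ha : 1 ≤ a') (hab : a' < b') (hb : b' ≤ k)
    (hT : (1:ℕ) ∉ (Finset.Icc a' (b'-1)).image (srefl k π)) :
    ∃ a b, 1 ≤ a ∧ a < b ∧ b ≤ k ∧
      ∀ j, 1 ≤ j → j ≤ k-1 →
        (j ∈ (Finset.Icc a (b-1)).image π ↔ k+1-j ∈ (Finset.Icc a' (b'-1)).image (srefl k π)) := by
  have hio := posOf_bounds hπ (v := 1) (by omega) (by omega)
  have hin : ¬ (a' ≤ posOf k π 1 ∧ posOf k π 1 ≤ b'-1) := by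
    rintro ⟨h1, h2⟩
    exact hT (mem_image_Icc.mpr ⟨posOf k π 1, ⟨h1, h2⟩,
      srefl_of_eq (by rw [Finset.mem_Icc]; omega) rfl⟩)
  by_cases hcase : b'-1 < posOf k π 1
  · refine ⟨posOf k π 1 - b' + 1, posOf k π 1 - a' + 1, by omega, by omega, by omega, ?_⟩
    intro j hj1 hj2
    constructor
    · intro hjm
      obtain ⟨r, hr, hrj⟩ := mem_image_Icc.mp hjm
      have hrI : r ∈ Finset.Icc 1 (k-1) := by rw [Finset.mem_Icc]; omega
      have hπm := pi_mem hπ hrI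
      rw [Finset.mem_Icc] at hπm
      refine mem_image_Icc.mpr ⟨posOf k π 1 - r, ⟨by omega, by omega⟩, ?_⟩
      rw [srefl_of_lt (by rw [Finset.mem_Icc]; omega) (by omega),
        (show posOf k π 1 - (posOf k π 1 - r) = r by omega)]
      omega
    · intro hjm
      obtain ⟨p, hp, hpj⟩ := mem_image_Icc.mp hjm
      have hpI : p ∈ Finset.Icc 1 (k-1) := by rw [Finset.mem_Icc]; omega
      rw [srefl_of_lt hpI (by omega)] at hpj
      have harg : posOf k π 1 - p ∈ Finset.Icc 1 (k-1) := by rw [Finset.mem_Icc]; omega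
      have hπm := pi_mem hπ harg
      rw [Finset.mem_Icc] at hπm
      exact mem_image_Icc.mpr ⟨posOf k π 1 - p, ⟨by omega, by omega⟩, by omega⟩
  · have hba : posOf k π 1 < a' := by omega
    refine ⟨k + posOf k π 1 - b' + 1, k + posOf k π 1 - a' + 1, by omega, by omega, by omega, ?_⟩
    intro j hj1 hj2
    constructor
    · intro hjm
      obtain ⟨r, hr, hrj⟩ := mem_image_Icc.mp hjm
      have hrI : r ∈ Finset.Icc 1 (k-1) := by rw [Finset.mem_Icc]; omega
      have hπm := pi_mem hπ hrI
      rw [Finset.mem_Icc] at hπm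
      refine mem_image_Icc.mpr ⟨k + posOf k π 1 - r, ⟨by omega, by omega⟩, ?_⟩
      rw [srefl_of_gt (by rw [Finset.mem_Icc]; omega) (by omega),
        (show k + posOf k π 1 - (k + posOf k π 1 - r) = r by omega)]
      omega
    · intro hjm
      obtain ⟨p, hp, hpj⟩ := mem_image_Icc.mp hjm
      have hpI : p ∈ Finset.Icc 1 (k-1) := by rw [Finset.mem_Icc]; omega
      rw [srefl_of_gt hpI (by omega)] at hpj
      have harg : k + posOf k π 1 - p ∈ Finset.Icc 1 (k-1) := by rw [Finset.mem_Icc]; omega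
      have hπm := pi_mem hπ harg
      rw [Finset.mem_Icc] at hπm
      exact mem_image_Icc.mpr ⟨k + posOf k π 1 - p, ⟨by omega, by omega⟩, by omega⟩

lemma S4 (hπ : OneLine k π) (hk : 2 ≤ k) {a' b' : ℕ} (ha : 1 ≤ a') (hab : a' < b') (hb : b' ≤ k)
    (hT : (1:ℕ) ∈ (Finset.Icc a' (b'-1)).image (srefl k π)) :
    ∃ a b, 1 ≤ a ∧ a < b ∧ b ≤ k ∧
      ∀ j, 1 ≤ j → j ≤ k-1 →
        (j ∈ (Finset.Icc a (b-1)).image π ↔ k+1-j ∉ (Finset.Icc a' (b'-1)).image (srefl k π)) := by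
  have hio := posOf_bounds hπ (v := 1) (by omega) (by omega)
  have hia : a' ≤ posOf k π 1 ∧ posOf k π 1 ≤ b'-1 := by
    obtain ⟨p, hp, hpv⟩ := mem_image_Icc.mp hT
    have hpI : p ∈ Finset.Icc 1 (k-1) := by rw [Finset.mem_Icc]; omega
    have : p = posOf k π 1 := by
      rcases lt_trichotomy p (posOf k π 1) with hc | hc | hc
      · rw [srefl_of_lt hpI hc] at hpv
        have hπm := pi_mem hπ (show posOf k π 1 - p ∈ Finset.Icc 1 (k-1) by
          rw [Finset.mem_Icc]; omega)
        rw [Finset.mem_Icc] at hπm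
        omega
      · exact hc
      · rw [srefl_of_gt hpI hc] at hpv
        have hπm := pi_mem hπ (show k + posOf k π 1 - p ∈ Finset.Icc 1 (k-1) by
          rw [Finset.mem_Icc]; omega)
        rw [Finset.mem_Icc] at hπm
        omega
    omega
  refine ⟨posOf k π 1 - a' + 1, k + posOf k π 1 - b' + 1, by omega, by omega, by omega, ?_⟩
  intro j hj1 hj2
  constructor
  · intro hjm
    obtain ⟨r, hr, hrj⟩ := mem_image_Icc.mp hjm
    have hrI : r ∈ Finset.Icc 1 (k-1) := by rw [Finset.mem_Icc]; omega
    have hπr := pi_mem hπ hrI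
    rw [Finset.mem_Icc] at hπr
    intro hmem
    obtain ⟨p, hp, hpj⟩ := mem_image_Icc.mp hmem
    have hpI : p ∈ Finset.Icc 1 (k-1) := by rw [Finset.mem_Icc]; omega
    rcases lt_trichotomy p (posOf k π 1) with hc | hc | hc
    · rw [srefl_of_lt hpI hc] at hpj
      have harg : posOf k π 1 - p ∈ Finset.Icc 1 (k-1) := by rw [Finset.mem_Icc]; omega
      have hπa := pi_mem hπ harg
      rw [Finset.mem_Icc] at hπa
      have : r = posOf k π 1 - p := by
        apply pi_inj hπ hrI harg
        omega
      omega
    · rw [srefl_of_eq hpI hc] at hpj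
      omega
    · rw [srefl_of_gt hpI hc] at hpj
      have harg : k + posOf k π 1 - p ∈ Finset.Icc 1 (k-1) := by rw [Finset.mem_Icc]; omega
      have hπa := pi_mem hπ harg
      rw [Finset.mem_Icc] at hπa
      have : r = k + posOf k π 1 - p := by
        apply pi_inj hπ hrI harg
        omega
      omega
  · intro hmem
    obtain ⟨hr1, hr2, hrv⟩ := posOf_bounds hπ (v := j) (by omega) (by omega)
    by_contra hcon
    rw [mem_image_Icc] at hcon
    push_neg at hcon
    have hout : ¬ (posOf k π 1 - a' + 1 ≤ posOf k π j
        ∧ posOf k π j ≤ k + posOf k π 1 - b' + 1 - 1) := by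
      rintro ⟨h1, h2⟩
      exact (hcon (posOf k π j) ⟨h1, h2⟩) hrv
    by_cases hrb : posOf k π j ≤ posOf k π 1 - a'
    · apply hmem
      refine mem_image_Icc.mpr ⟨posOf k π 1 - posOf k π j, ⟨by omega, by omega⟩, ?_⟩
      rw [srefl_of_lt (by rw [Finset.mem_Icc]; omega) (by omega),
        (show posOf k π 1 - (posOf k π 1 - posOf k π j) = posOf k π j by omega), hrv]
    · apply hmem
      refine mem_image_Icc.mpr ⟨k + posOf k π 1 - posOf k π j, ⟨by omega, by omega⟩, ?_⟩
      rw [srefl_of_gt (by rw [Finset.mem_Icc]; omega) (by omega),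
        (show k + posOf k π 1 - (k + posOf k π 1 - posOf k π j) = posOf k π j by omega), hrv]

end Aux6

section Aux7
variable {k q : ℕ} {π : ℕ → ℕ} {x y u v : ℕ → ℕ}

lemma Frot_formula (hk : 2 ≤ k) (hq : 1 ≤ q) {ψ : ℕ → ℕ} (hx : x ∈ W k q π) {j : ℕ}
    (hj1 : 1 ≤ j) (hj2 : j ≤ k-1) :
    mkv k ψ (Grot k q π x) j + x (k-1) + (∑ i ∈ Finset.Icc 1 (j-1), eps k π i)
      = (q-1) + x (j-1) + (∑ i ∈ Finset.Icc 1 j, eps k ψ i) := by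
  have e1 : mkv k ψ (Grot k q π x) j = cumG k ψ (Grot k q π x) j := by
    unfold mkv; rw [if_pos (by rw [Finset.mem_Icc]; omega)]
  rw [e1, cum_split]
  have e0 : ∑ i ∈ Finset.Icc 1 j, Grot k q π x i
      = ∑ i ∈ Finset.Icc 1 j, (if i = 1 then dval k q π x k else dval k q π x (i-1)) := rfl
  rw [e0, sum_shift1_partial hj1 _ _]
  have e3 := dval_top_eq hk hq hx
  have e4 := sum_dval_partial hk hx (m := j-1) (by omega)
  rw [xext_ne (by omega : j-1 ≠ k)] at e4
  omega

lemma Hrot_formula (hk : 2 ≤ k) (hq : 1 ≤ q) {ψ : ℕ → ℕ} (hu : u ∈ W k q π) {j : ℕ}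
    (hj1 : 1 ≤ j) (hj2 : j ≤ k-1) :
    mkv k ψ (Grotinv k q π u) j + u 1 + (∑ i ∈ Finset.Icc 1 (j+1), eps k π i)
      = xext k q u (j+1) + (∑ i ∈ Finset.Icc 1 j, eps k ψ i) := by
  have e1 : mkv k ψ (Grotinv k q π u) j = cumG k ψ (Grotinv k q π u) j := by
    unfold mkv; rw [if_pos (by rw [Finset.mem_Icc]; omega)]
  rw [e1, cum_split]
  have e0 : ∑ i ∈ Finset.Icc 1 j, Grotinv k q π u i
      = ∑ i ∈ Finset.Icc 1 j, (if i = k then dval k q π u 1 else dval k q π u (i+1)) := rfl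
  rw [e0]
  have e2 := sum_shift2_partial (k := k) (j := j) hk hj2 (dval k q π u 1) (dval k q π u)
  have e3 := dval_one_eq hk hq hu
  have e4 := sum_dval_partial hk hu (m := j+1) (by omega)
  omega

lemma Fref_formula (hk : 2 ≤ k) (hq : 1 ≤ q) {ψ : ℕ → ℕ} (hx : x ∈ W k q π) {j : ℕ}
    (hj1 : 1 ≤ j) (hj2 : j ≤ k-1) :
    mkv k ψ (Gref k q π x) j + (∑ i ∈ Finset.Icc 1 k, eps k π i) + xext k q x (k+1-j)
      = x 1 + (q-1) + (∑ i ∈ Finset.Icc 1 (k+1-j), eps k π i)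
        + (∑ i ∈ Finset.Icc 1 j, eps k ψ i) := by
  have e1 : mkv k ψ (Gref k q π x) j = cumG k ψ (Gref k q π x) j := by
    unfold mkv; rw [if_pos (by rw [Finset.mem_Icc]; omega)]
  rw [e1, cum_split]
  have e0 : ∑ i ∈ Finset.Icc 1 j, Gref k q π x i
      = ∑ i ∈ Finset.Icc 1 j, (if i = 1 then dval k q π x 1 else dval k q π x (k+2-i)) := rfl
  rw [e0, sum_refl_partial hk hj1 (by omega) _ _]
  have e3 := dval_one_eq hk hq hx
  have e4 := sum_dval_partial hk hx (m := k+1-j) (by omega)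
  have e5 := sum_Icc_split (dval k q π x) (k+1-j) k (by omega)
  rw [(show k+1-j+1 = k+2-j by omega)] at e5
  have e6 := sum_dval_partial hk hx (m := k) le_rfl
  rw [xext_k] at e6
  omega

lemma adj_symm {ψ : ℕ → ℕ} (h : AdjRel k ψ x y) : AdjRel k ψ y x := by
  obtain ⟨a, b, h1, h2, h3, h4⟩ := h
  exact ⟨a, b, h1, h2, h3, h4.symm⟩

lemma image_pi_sub (hπ : OneLine k π) {a b : ℕ} (ha : 1 ≤ a) (hb : b ≤ k) :
    ∀ j, j ∈ (Finset.Icc a (b-1)).image π → 1 ≤ j ∧ j ≤ k-1 := by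
  intro j hj
  obtain ⟨p, hp, hpj⟩ := mem_image_Icc.mp hj
  have := pi_mem hπ (show p ∈ Finset.Icc 1 (k-1) by rw [Finset.mem_Icc]; omega)
  rw [Finset.mem_Icc] at this
  omega

lemma image_rot_sub (hπ : OneLine k π) (hk : 2 ≤ k) {a b : ℕ} (ha : 1 ≤ a) (hb : b ≤ k) :
    ∀ j, j ∈ (Finset.Icc a (b-1)).image (rot k π) → 1 ≤ j ∧ j ≤ k-1 := by
  have htm := posOf_bounds hπ (v := k-1) (by omega) (by omega)
  intro j hj
  obtain ⟨p, hp, hpj⟩ := mem_image_Icc.mp hj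
  have hpI : p ∈ Finset.Icc 1 (k-1) := by rw [Finset.mem_Icc]; omega
  rcases lt_trichotomy p (k - posOf k π (k-1)) with hc | hc | hc
  · rw [rot_of_lt hpI hc] at hpj
    have harg : posOf k π (k-1) + p ∈ Finset.Icc 1 (k-1) := by rw [Finset.mem_Icc]; omega
    have hπm := pi_mem hπ harg
    rw [Finset.mem_Icc] at hπm
    have hne : π (posOf k π (k-1) + p) ≠ k-1 := by
      intro hcon
      have := posOf_uniq hπ (v := k-1) (by rw [Finset.mem_Icc]; omega) harg hcon
      omega
    omega
  · rw [rot_of_eq hpI hc] at hpj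
    omega
  · rw [rot_of_gt hpI hc] at hpj
    have harg : p - (k - posOf k π (k-1)) ∈ Finset.Icc 1 (k-1) := by rw [Finset.mem_Icc]; omega
    have hπm := pi_mem hπ harg
    rw [Finset.mem_Icc] at hπm
    have hne : π (p - (k - posOf k π (k-1))) ≠ k-1 := by
      intro hcon
      have := posOf_uniq hπ (v := k-1) (by rw [Finset.mem_Icc]; omega) harg hcon
      omega
    omega

lemma image_srefl_sub (hπ : OneLine k π) (hk : 2 ≤ k) {a b : ℕ} (ha : 1 ≤ a) (hb : b ≤ k) :
    ∀ j, j ∈ (Finset.Icc a (b-1)).image (srefl k π) → 1 ≤ j ∧ j ≤ k-1 := by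
  have hio := posOf_bounds hπ (v := 1) (by omega) (by omega)
  intro j hj
  obtain ⟨p, hp, hpj⟩ := mem_image_Icc.mp hj
  have hpI : p ∈ Finset.Icc 1 (k-1) := by rw [Finset.mem_Icc]; omega
  rcases lt_trichotomy p (posOf k π 1) with hc | hc | hc
  · rw [srefl_of_lt hpI hc] at hpj
    have harg : posOf k π 1 - p ∈ Finset.Icc 1 (k-1) := by rw [Finset.mem_Icc]; omega
    have hπm := pi_mem hπ harg
    rw [Finset.mem_Icc] at hπm
    have hne : π (posOf k π 1 - p) ≠ 1 := by
      intro hcon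
      have := posOf_uniq hπ (v := 1) (by rw [Finset.mem_Icc]; omega) harg hcon
      omega
    omega
  · rw [srefl_of_eq hpI hc] at hpj
    omega
  · rw [srefl_of_gt hpI hc] at hpj
    have harg : k + posOf k π 1 - p ∈ Finset.Icc 1 (k-1) := by rw [Finset.mem_Icc]; omega
    have hπm := pi_mem hπ harg
    rw [Finset.mem_Icc] at hπm
    have hne : π (k + posOf k π 1 - p) ≠ 1 := by
      intro hcon
      have := posOf_uniq hπ (v := 1) (by rw [Finset.mem_Icc]; omega) harg hcon
      omega
    omega

lemma frot_zero (hj : j ∉ Finset.Icc 1 (k-1)) : mkv k ψ G j = 0 := by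
  unfold mkv; rw [if_neg hj]

end Aux7

section Aux8
variable {k q : ℕ} {π : ℕ → ℕ} {x y u v : ℕ → ℕ}

lemma adj_shift_frot (hπ : OneLine k π) (hk : 2 ≤ k) (hq : 1 ≤ q)
    (hx : x ∈ W k q π) (hy : y ∈ W k q π) {a b : ℕ}
    (ha : 1 ≤ a) (hab : a < b) (hb : b ≤ k) (hsh : y = shift π a b x) :
    AdjRel k (rot k π) (frot k q π x) (frot k q π y) := by
  have hyx : ∀ m, y m = x m + (if m ∈ (Finset.Icc a (b-1)).image π then 1 else 0) := by
    intro m; rw [hsh]; rfl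
  by_cases hc : k-1 ∈ (Finset.Icc a (b-1)).image π
  · obtain ⟨a', b', h1, h2, h3, hiff⟩ := R2 hπ hk ha hab hb hc
    refine ⟨a', b', h1, h2, h3, Or.inr ?_⟩
    funext j
    show frot k q π x j = frot k q π y j
      + (if j ∈ (Finset.Icc a' (b'-1)).image (rot k π) then 1 else 0)
    unfold frot
    by_cases hjI : j ∈ Finset.Icc 1 (k-1)
    · rw [Finset.mem_Icc] at hjI
      have e1 := Frot_formula (ψ := rot k π) hk hq hx hjI.1 hjI.2
      have e2 := Frot_formula (ψ := rot k π) hk hq hy hjI.1 hjI.2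
      have e3 := hyx (k-1)
      have e4 := hyx (j-1)
      rw [if_pos hc] at e3
      by_cases hm : j-1 ∈ (Finset.Icc a (b-1)).image π
      · rw [if_pos hm] at e4
        rw [if_neg (fun hmem => (hiff j hjI.1 hjI.2).mp hmem hm)]
        omega
      · rw [if_neg hm] at e4
        rw [if_pos ((hiff j hjI.1 hjI.2).mpr hm)]
        omega
    · rw [frot_zero hjI, frot_zero hjI,
        if_neg (fun hmem => hjI (by
          rw [Finset.mem_Icc]
          exact image_rot_sub hπ hk h1 h3 j hmem))]
  · obtain ⟨a', b', h1, h2, h3, hiff⟩ := R1 hπ hk ha hab hb hc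
    refine ⟨a', b', h1, h2, h3, Or.inl ?_⟩
    funext j
    show frot k q π y j = frot k q π x j
      + (if j ∈ (Finset.Icc a' (b'-1)).image (rot k π) then 1 else 0)
    unfold frot
    by_cases hjI : j ∈ Finset.Icc 1 (k-1)
    · rw [Finset.mem_Icc] at hjI
      have e1 := Frot_formula (ψ := rot k π) hk hq hx hjI.1 hjI.2
      have e2 := Frot_formula (ψ := rot k π) hk hq hy hjI.1 hjI.2
      have e3 := hyx (k-1)
      have e4 := hyx (j-1)
      rw [if_neg hc] at e3
      by_cases hm : j-1 ∈ (Finset.Icc a (b-1)).image π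
      · rw [if_pos hm] at e4
        rw [if_pos ((hiff j hjI.1 hjI.2).mpr hm)]
        omega
      · rw [if_neg hm] at e4
        rw [if_neg (fun hmem => hm ((hiff j hjI.1 hjI.2).mp hmem))]
        omega
    · rw [frot_zero hjI, frot_zero hjI,
        if_neg (fun hmem => hjI (by
          rw [Finset.mem_Icc]
          exact image_rot_sub hπ hk h1 h3 j hmem))]

lemma adj_shift_hrot (hπ : OneLine k π) (hk : 2 ≤ k) (hq : 1 ≤ q)
    (hu : u ∈ W k q (rot k π)) (hv : v ∈ W k q (rot k π)) {a' b' : ℕ}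
    (ha : 1 ≤ a') (hab : a' < b') (hb : b' ≤ k) (hsh : v = shift (rot k π) a' b' u) :
    AdjRel k π (hrot k q π u) (hrot k q π v) := by
  have hvu : ∀ m, v m = u m + (if m ∈ (Finset.Icc a' (b'-1)).image (rot k π) then 1 else 0) := by
    intro m; rw [hsh]; rfl
  have e4 : ∀ j, 1 ≤ j → j ≤ k-1 → xext k q v (j+1)
      = xext k q u (j+1) + (if j+1 ∈ (Finset.Icc a' (b'-1)).image (rot k π) then 1 else 0) := by
    intro j hj1 hj2
    by_cases hjk : j+1 = k
    · have hnk : (j+1:ℕ) ∉ (Finset.Icc a' (b'-1)).image (rot k π) := by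
        intro hmem
        have := image_rot_sub hπ hk ha hb (j+1) hmem
        omega
      rw [hjk] at hnk ⊢
      rw [xext_k, xext_k, if_neg hnk]
      omega
    · rw [xext_ne hjk, xext_ne hjk, hvu (j+1)]
  by_cases hc : (1:ℕ) ∈ (Finset.Icc a' (b'-1)).image (rot k π)
  · obtain ⟨a, b, h1, h2, h3, hiff⟩ := R4 hπ hk ha hab hb hc
    refine ⟨a, b, h1, h2, h3, Or.inr ?_⟩
    funext j
    show hrot k q π u j = hrot k q π v j + (if j ∈ (Finset.Icc a (b-1)).image π then 1 else 0)
    unfold hrot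
    by_cases hjI : j ∈ Finset.Icc 1 (k-1)
    · rw [Finset.mem_Icc] at hjI
      have e1 := Hrot_formula (π := rot k π) (ψ := π) hk hq hu hjI.1 hjI.2
      have e2 := Hrot_formula (π := rot k π) (ψ := π) hk hq hv hjI.1 hjI.2
      have e3 := hvu 1
      rw [if_pos hc] at e3
      have e4' := e4 j hjI.1 hjI.2
      by_cases hm : j+1 ∈ (Finset.Icc a' (b'-1)).image (rot k π)
      · rw [if_pos hm] at e4'
        rw [if_neg (fun hmem => (hiff j hjI.1 hjI.2).mp hmem hm)]
        omega
      · rw [if_neg hm] at e4'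
        rw [if_pos ((hiff j hjI.1 hjI.2).mpr hm)]
        omega
    · rw [frot_zero hjI, frot_zero hjI,
        if_neg (fun hmem => hjI (by
          rw [Finset.mem_Icc]
          exact image_pi_sub hπ h1 h3 j hmem))]
  · obtain ⟨a, b, h1, h2, h3, hiff⟩ := R3 hπ hk ha hab hb hc
    refine ⟨a, b, h1, h2, h3, Or.inl ?_⟩
    funext j
    show hrot k q π v j = hrot k q π u j + (if j ∈ (Finset.Icc a (b-1)).image π then 1 else 0)
    unfold hrot
    by_cases hjI : j ∈ Finset.Icc 1 (k-1)
    · rw [Finset.mem_Icc] at hjI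
      have e1 := Hrot_formula (π := rot k π) (ψ := π) hk hq hu hjI.1 hjI.2
      have e2 := Hrot_formula (π := rot k π) (ψ := π) hk hq hv hjI.1 hjI.2
      have e3 := hvu 1
      rw [if_neg hc] at e3
      have e4' := e4 j hjI.1 hjI.2
      by_cases hm : j+1 ∈ (Finset.Icc a' (b'-1)).image (rot k π)
      · rw [if_pos hm] at e4'
        rw [if_pos ((hiff j hjI.1 hjI.2).mpr hm)]
        omega
      · rw [if_neg hm] at e4'
        rw [if_neg (fun hmem => hm ((hiff j hjI.1 hjI.2).mp hmem))]
        omega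
    · rw [frot_zero hjI, frot_zero hjI,
        if_neg (fun hmem => hjI (by
          rw [Finset.mem_Icc]
          exact image_pi_sub hπ h1 h3 j hmem))]

lemma adj_shift_fsr (hπ : OneLine k π) (hk : 2 ≤ k) (hq : 1 ≤ q)
    (hx : x ∈ W k q π) (hy : y ∈ W k q π) {a b : ℕ}
    (ha : 1 ≤ a) (hab : a < b) (hb : b ≤ k) (hsh : y = shift π a b x) :
    AdjRel k (srefl k π) (fsr k q π x) (fsr k q π y) := by
  have hyx : ∀ m, y m = x m + (if m ∈ (Finset.Icc a (b-1)).image π then 1 else 0) := by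
    intro m; rw [hsh]; rfl
  have e4 : ∀ j, 1 ≤ j → j ≤ k-1 → xext k q y (k+1-j)
      = xext k q x (k+1-j) + (if k+1-j ∈ (Finset.Icc a (b-1)).image π then 1 else 0) := by
    intro j hj1 hj2
    by_cases hjk : k+1-j = k
    · have hnk : (k+1-j:ℕ) ∉ (Finset.Icc a (b-1)).image π := by
        intro hmem
        have := image_pi_sub hπ ha hb (k+1-j) hmem
        omega
      rw [hjk] at hnk ⊢
      rw [xext_k, xext_k, if_neg hnk]
      omega
    · rw [xext_ne hjk, xext_ne hjk, hyx (k+1-j)]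
  by_cases hc : (1:ℕ) ∈ (Finset.Icc a (b-1)).image π
  · obtain ⟨a', b', h1, h2, h3, hiff⟩ := S2 hπ hk ha hab hb hc
    refine ⟨a', b', h1, h2, h3, Or.inl ?_⟩
    funext j
    show fsr k q π y j = fsr k q π x j
      + (if j ∈ (Finset.Icc a' (b'-1)).image (srefl k π) then 1 else 0)
    unfold fsr
    by_cases hjI : j ∈ Finset.Icc 1 (k-1)
    · rw [Finset.mem_Icc] at hjI
      have e1 := Fref_formula (ψ := srefl k π) hk hq hx hjI.1 hjI.2
      have e2 := Fref_formula (ψ := srefl k π) hk hq hy hjI.1 hjI.2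
      have e3 := hyx 1
      rw [if_pos hc] at e3
      have e4' := e4 j hjI.1 hjI.2
      by_cases hm : k+1-j ∈ (Finset.Icc a (b-1)).image π
      · rw [if_pos hm] at e4'
        rw [if_neg (fun hmem => (hiff j hjI.1 hjI.2).mp hmem hm)]
        omega
      · rw [if_neg hm] at e4'
        rw [if_pos ((hiff j hjI.1 hjI.2).mpr hm)]
        omega
    · rw [frot_zero hjI, frot_zero hjI,
        if_neg (fun hmem => hjI (by
          rw [Finset.mem_Icc]
          exact image_srefl_sub hπ hk h1 h3 j hmem))]
  · obtain ⟨a', b', h1, h2, h3, hiff⟩ := S1 hπ hk ha hab hb hc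
    refine ⟨a', b', h1, h2, h3, Or.inr ?_⟩
    funext j
    show fsr k q π x j = fsr k q π y j
      + (if j ∈ (Finset.Icc a' (b'-1)).image (srefl k π) then 1 else 0)
    unfold fsr
    by_cases hjI : j ∈ Finset.Icc 1 (k-1)
    · rw [Finset.mem_Icc] at hjI
      have e1 := Fref_formula (ψ := srefl k π) hk hq hx hjI.1 hjI.2
      have e2 := Fref_formula (ψ := srefl k π) hk hq hy hjI.1 hjI.2
      have e3 := hyx 1
      rw [if_neg hc] at e3
      have e4' := e4 j hjI.1 hjI.2
      by_cases hm : k+1-j ∈ (Finset.Icc a (b-1)).image π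
      · rw [if_pos hm] at e4'
        rw [if_pos ((hiff j hjI.1 hjI.2).mpr hm)]
        omega
      · rw [if_neg hm] at e4'
        rw [if_neg (fun hmem => hm ((hiff j hjI.1 hjI.2).mp hmem))]
        omega
    · rw [frot_zero hjI, frot_zero hjI,
        if_neg (fun hmem => hjI (by
          rw [Finset.mem_Icc]
          exact image_srefl_sub hπ hk h1 h3 j hmem))]

lemma adj_shift_hsr (hπ : OneLine k π) (hk : 2 ≤ k) (hq : 1 ≤ q)
    (hu : u ∈ W k q (srefl k π)) (hv : v ∈ W k q (srefl k π)) {a' b' : ℕ}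
    (ha : 1 ≤ a') (hab : a' < b') (hb : b' ≤ k) (hsh : v = shift (srefl k π) a' b' u) :
    AdjRel k π (hsr k q π u) (hsr k q π v) := by
  have hvu : ∀ m, v m = u m + (if m ∈ (Finset.Icc a' (b'-1)).image (srefl k π) then 1 else 0) := by
    intro m; rw [hsh]; rfl
  have e4 : ∀ j, 1 ≤ j → j ≤ k-1 → xext k q v (k+1-j)
      = xext k q u (k+1-j) + (if k+1-j ∈ (Finset.Icc a' (b'-1)).image (srefl k π) then 1 else 0) := by
    intro j hj1 hj2
    by_cases hjk : k+1-j = k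
    · have hnk : (k+1-j:ℕ) ∉ (Finset.Icc a' (b'-1)).image (srefl k π) := by
        intro hmem
        have := image_srefl_sub hπ hk ha hb (k+1-j) hmem
        omega
      rw [hjk] at hnk ⊢
      rw [xext_k, xext_k, if_neg hnk]
      omega
    · rw [xext_ne hjk, xext_ne hjk, hvu (k+1-j)]
  by_cases hc : (1:ℕ) ∈ (Finset.Icc a' (b'-1)).image (srefl k π)
  · obtain ⟨a, b, h1, h2, h3, hiff⟩ := S4 hπ hk ha hab hb hc
    refine ⟨a, b, h1, h2, h3, Or.inl ?_⟩
    funext j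
    show hsr k q π v j = hsr k q π u j + (if j ∈ (Finset.Icc a (b-1)).image π then 1 else 0)
    unfold hsr
    by_cases hjI : j ∈ Finset.Icc 1 (k-1)
    · rw [Finset.mem_Icc] at hjI
      have e1 := Fref_formula (π := srefl k π) (ψ := π) hk hq hu hjI.1 hjI.2
      have e2 := Fref_formula (π := srefl k π) (ψ := π) hk hq hv hjI.1 hjI.2
      have e3 := hvu 1
      rw [if_pos hc] at e3
      have e4' := e4 j hjI.1 hjI.2
      by_cases hm : k+1-j ∈ (Finset.Icc a' (b'-1)).image (srefl k π)
      · rw [if_pos hm] at e4'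
        rw [if_neg (fun hmem => (hiff j hjI.1 hjI.2).mp hmem hm)]
        omega
      · rw [if_neg hm] at e4'
        rw [if_pos ((hiff j hjI.1 hjI.2).mpr hm)]
        omega
    · rw [frot_zero hjI, frot_zero hjI,
        if_neg (fun hmem => hjI (by
          rw [Finset.mem_Icc]
          exact image_pi_sub hπ h1 h3 j hmem))]
  · obtain ⟨a, b, h1, h2, h3, hiff⟩ := S3 hπ hk ha hab hb hc
    refine ⟨a, b, h1, h2, h3, Or.inr ?_⟩
    funext j
    show hsr k q π u j = hsr k q π v j + (if j ∈ (Finset.Icc a (b-1)).image π then 1 else 0)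
    unfold hsr
    by_cases hjI : j ∈ Finset.Icc 1 (k-1)
    · rw [Finset.mem_Icc] at hjI
      have e1 := Fref_formula (π := srefl k π) (ψ := π) hk hq hu hjI.1 hjI.2
      have e2 := Fref_formula (π := srefl k π) (ψ := π) hk hq hv hjI.1 hjI.2
      have e3 := hvu 1
      rw [if_neg hc] at e3
      have e4' := e4 j hjI.1 hjI.2
      by_cases hm : k+1-j ∈ (Finset.Icc a' (b'-1)).image (srefl k π)
      · rw [if_pos hm] at e4'
        rw [if_pos ((hiff j hjI.1 hjI.2).mpr hm)]
        omega
      · rw [if_neg hm] at e4'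
        rw [if_neg (fun hmem => hm ((hiff j hjI.1 hjI.2).mp hmem))]
        omega
    · rw [frot_zero hjI, frot_zero hjI,
        if_neg (fun hmem => hjI (by
          rw [Finset.mem_Icc]
          exact image_pi_sub hπ h1 h3 j hmem))]

end Aux8

section Aux9
variable {k q : ℕ} {π : ℕ → ℕ} {x y : ℕ → ℕ}

lemma adj_iff_rot (hπ : OneLine k π) (hk : 2 ≤ k) (hq : 1 ≤ q)
    (hx : x ∈ W k q π) (hy : y ∈ W k q π) :
    AdjRel k π x y ↔ AdjRel k (rot k π) (frot k q π x) (frot k q π y) := by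
  constructor
  · rintro ⟨a, b, h1, h2, h3, hor | hor⟩
    · exact adj_shift_frot hπ hk hq hx hy h1 h2 h3 hor
    · exact adj_symm (adj_shift_frot hπ hk hq hy hx h1 h2 h3 hor)
  · intro h
    have h2 : AdjRel k π (hrot k q π (frot k q π x)) (hrot k q π (frot k q π y)) := by
      obtain ⟨a', b', h1, h2, h3, hor | hor⟩ := h
      · exact adj_shift_hrot hπ hk hq (frot_mem hπ hk hq hx) (frot_mem hπ hk hq hy) h1 h2 h3 hor
      · exact adj_symm (adj_shift_hrot hπ hk hq (frot_mem hπ hk hq hy)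
          (frot_mem hπ hk hq hx) h1 h2 h3 hor)
    rwa [hrot_frot hπ hk hq hx, hrot_frot hπ hk hq hy] at h2

lemma adj_iff_srefl (hπ : OneLine k π) (hk : 2 ≤ k) (hq : 1 ≤ q)
    (hx : x ∈ W k q π) (hy : y ∈ W k q π) :
    AdjRel k π x y ↔ AdjRel k (srefl k π) (fsr k q π x) (fsr k q π y) := by
  constructor
  · rintro ⟨a, b, h1, h2, h3, hor | hor⟩
    · exact adj_shift_fsr hπ hk hq hx hy h1 h2 h3 hor
    · exact adj_symm (adj_shift_fsr hπ hk hq hy hx h1 h2 h3 hor)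
  · intro h
    have h2 : AdjRel k π (hsr k q π (fsr k q π x)) (hsr k q π (fsr k q π y)) := by
      obtain ⟨a', b', h1, h2, h3, hor | hor⟩ := h
      · exact adj_shift_hsr hπ hk hq (fsr_mem hπ hk hq hx) (fsr_mem hπ hk hq hy) h1 h2 h3 hor
      · exact adj_symm (adj_shift_hsr hπ hk hq (fsr_mem hπ hk hq hy)
          (fsr_mem hπ hk hq hx) h1 h2 h3 hor)
    rwa [hsr_fsr hπ hk hq hx, hsr_fsr hπ hk hq hy] at h2

end Aux9

theorem stmt13 (k q : ℕ) (hk : 2 ≤ k) (hq : 1 ≤ q) (π : ℕ → ℕ) (hπ : OneLine k π) :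
    (∃ f : (ℕ → ℕ) → (ℕ → ℕ),
      Set.BijOn f (W k q π) (W k q (rot k π)) ∧
      (∀ x ∈ W k q π, ∀ y ∈ W k q π,
        (AdjRel k π x y ↔ AdjRel k (rot k π) (f x) (f y))) ∧
      (∀ x ∈ W k q π,
        labels k q (rot k π) (f x) = (labels k q π x).image (rotV k))) ∧
    (∃ f : (ℕ → ℕ) → (ℕ → ℕ),
      Set.BijOn f (W k q π) (W k q (srefl k π)) ∧
      (∀ x ∈ W k q π, ∀ y ∈ W k q π,
        (AdjRel k π x y ↔ AdjRel k (srefl k π) (f x) (f y))) ∧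
      (∀ x ∈ W k q π,
        labels k q (srefl k π) (f x) = (labels k q π x).image (sreflV k))) := by
  constructor
  · refine ⟨frot k q π, ⟨fun x hx => frot_mem hπ hk hq hx, ?_, ?_⟩, ?_, ?_⟩
    · intro x hx y hy hxy
      rw [← hrot_frot hπ hk hq hx, ← hrot_frot hπ hk hq hy, hxy]
    · intro u hu
      exact ⟨hrot k q π u, hrot_mem hπ hk hq hu, frot_hrot hπ hk hq hu⟩
    · intro x hx y hy
      exact adj_iff_rot hπ hk hq hx hy
    · intro x hx
      exact labels_frot hπ hk hq hx
  · refine ⟨fsr k q π, ⟨fun x hx => fsr_mem hπ hk hq hx, ?_, ?_⟩, ?_, ?_⟩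
    · intro x hx y hy hxy
      rw [← hsr_fsr hπ hk hq hx, ← hsr_fsr hπ hk hq hy, hxy]
    · intro u hu
      exact ⟨hsr k q π u, hsr_mem hπ hk hq hu, fsr_hsr hπ hk hq hu⟩
    · intro x hx y hy
      exact adj_iff_srefl hπ hk hq hx hy
    · intro x hx
      exact labels_fsr hπ hk hq hx

end
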